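/- arXiv:2004.07243 — 3 statements merged into one kernel-verified Lean document; each statement's English description precedes it below -/
import Mathlib

section
/- Let {s_1,…,s_N} be an independent set of N Hermitian, pairwise commuting Pauli strings on N qubits, G the group they generate, and ψ a unit vector with s_i ψ = ψ for all i. For a subset A of the qubits let G_A = {g ∈ G : g acts as the identity on every site outside A}, and for g ∈ G_A let g|_A denote the matrix induced by g on the qubits in A. Then the reduced density matrix of |ψ⟩⟨ψ| on A equals ρ_A = 2^{−|A|} Σ_{g ∈ G_A} g|_A. -/
open scoped Classical
set_option linter.unusedSectionVars false
open scoped Matrix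
noncomputable section
namespace QStab

/-- The space of operators (matrices) on a chain of qubits indexed by `ι`. -/
abbrev Op (ι : Type*) [Fintype ι] [DecidableEq ι] : Type _ :=
  Matrix (ι → Fin 2) (ι → Fin 2) ℂ

variable {ι : Type*} [Fintype ι] [DecidableEq ι]

/-- The Pauli `X` operator at site `i`. -/
def PX (i : ι) : Op ι :=
  Matrix.of fun f g => if f = Function.update g i (g i + 1) then 1 else 0

/-- The Pauli `Z` operator at site `i`. -/
def PZ (i : ι) : Op ι :=
  Matrix.of fun f g => if f = g then ((-1 : ℂ)) ^ ((f i : ℕ)) else 0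

/-- The (ordered) product `∏ i, (X i)^(a i)`. -/
def XProd (a : ι → Fin 2) : Op ι :=
  (Finset.univ.toList.map fun i => PX i ^ ((a i : ℕ))).prod

/-- The (ordered) product `∏ i, (Z i)^(b i)`. -/
def ZProd (b : ι → Fin 2) : Op ι :=
  (Finset.univ.toList.map fun i => PZ i ^ ((b i : ℕ))).prod

/-- `c` is one of the allowed phases `1, −1, i, −i` of a Pauli string. -/
def IsPhase (c : ℂ) : Prop := c = 1 ∨ c = -1 ∨ c = Complex.I ∨ c = -Complex.I

/-- `M` is a Pauli string: `M = c • (∏ i, (X i)^(a i)) * (∏ i, (Z i)^(b i))`. -/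
def IsPauli (M : Op ι) : Prop :=
  ∃ (c : ℂ) (a b : ι → Fin 2), IsPhase c ∧ M = c • (XProd a * ZProd b)

/-- `M` is a Pauli string acting as the identity on every site outside `A`. -/
def IsPauliSupportedOn (A : Finset ι) (M : Op ι) : Prop :=
  ∃ (c : ℂ) (a b : ι → Fin 2), IsPhase c ∧ (∀ i, i ∉ A → a i = 0 ∧ b i = 0) ∧
    M = c • (XProd a * ZProd b)

/-- `M` is a Pauli string acting trivially (as the identity) at the site `i`. -/
def ActsTriviallyAt (i : ι) (M : Op ι) : Prop :=
  ∃ (c : ℂ) (a b : ι → Fin 2), IsPhase c ∧ a i = 0 ∧ b i = 0 ∧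
    M = c • (XProd a * ZProd b)

/-- The function on all of `ι` agreeing with `f` on `A` and with `h` on `Aᶜ`. -/
def combine (A : Finset ι) (f : ↥A → Fin 2) (h : ↥(Aᶜ) → Fin 2) : ι → Fin 2 :=
  fun i => if hi : i ∈ A then f ⟨i, hi⟩ else h ⟨i, Finset.mem_compl.mpr hi⟩

/-- The partial trace over the qubits outside `A` (the reduced density matrix on `A`). -/
def ptrace (A : Finset ι) (ρ : Op ι) : Matrix (↥A → Fin 2) (↥A → Fin 2) ℂ :=
  Matrix.of fun f g => ∑ h : ↥(Aᶜ) → Fin 2, ρ (combine A f h) (combine A g h)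

/-- The rank-one projector `|ψ⟩⟨ψ|`. -/
def outer (ψ : (ι → Fin 2) → ℂ) : Op ι :=
  Matrix.of fun f g => ψ f * star (ψ g)

/-- `ψ` is a unit vector. -/
def IsUnitVec (ψ : (ι → Fin 2) → ℂ) : Prop :=
  ∑ f, Complex.normSq (ψ f) = 1

/-- The von Neumann entropy `−Tr(ρ log ρ)` of a Hermitian matrix, computed through its
eigenvalues (with the convention `0 log 0 = 0`, and junk value `0` on non-Hermitian input). -/
def vnEntropy {n : Type*} [Fintype n] [DecidableEq n] (ρ : Matrix n n ℂ) : ℝ :=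
  if h : ρ.IsHermitian then -∑ i, (h.eigenvalues i * Real.log (h.eigenvalues i)) else 0

/-- The von Neumann entanglement entropy of `ψ` in the region `A`:
`S_A(ψ) = −Tr(ρ_A log ρ_A)` where `ρ_A` is the reduced density matrix of `|ψ⟩⟨ψ|`. -/
def entEntropy (A : Finset ι) (ψ : (ι → Fin 2) → ℂ) : ℝ :=
  vnEntropy (ptrace A (outer ψ))

/-- The product of the `s i` over the subset `T` (in increasing order of indices). -/
def subProd {N : ℕ} (s : Fin N → Op ι) (T : Finset (Fin N)) : Op ι :=
  ((Finset.sort T (· ≤ ·)).map s).prod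

/-- `{s 0, …, s (N-1)}` is an independent set of `N` Hermitian pairwise commuting Pauli
strings: products over distinct subsets are pairwise distinct and no nonempty product
equals `±I`. -/
def IndepStabs {N : ℕ} (s : Fin N → Op ι) : Prop :=
  (∀ i, IsPauli (s i)) ∧ (∀ i, (s i).IsHermitian) ∧
  (∀ i j, Commute (s i) (s j)) ∧
  Function.Injective (subProd s) ∧
  (∀ T : Finset (Fin N), T.Nonempty → subProd s T ≠ 1 ∧ subProd s T ≠ -1)

/-- The 1-based label of the site `i : Fin N`, so that the qubits are labeled `1, …, N`. -/
def lbl {N : ℕ} (i : Fin N) : ℕ := (i : ℕ) + 1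

/-- The single-qubit operator `Z p` at the site with label `p` (1-based). -/
def ZSingle (N : ℕ) (p : ℕ) : Op (Fin N) :=
  ZProd fun i => if lbl i = p then 1 else 0

/-- The string of `Z`'s at the labels `p, p+2, …, q` (sites of the parity of `p` in `[p,q]`). -/
def ZStr (N : ℕ) (p q : ℕ) : Op (Fin N) :=
  ZProd fun i => if p ≤ lbl i ∧ lbl i ≤ q ∧ lbl i % 2 = p % 2 then 1 else 0

/-- The string operator `g_{p,q} = X p * (∏_{k=0}^{(q−p)/2−1} Z (p+2k+1)) * X q`
for labels `p < q` of the same parity.  In particular the cluster stabilizer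
`g i = X (i−1) * Z i * X (i+1)` is `GStr N (i-1) (i+1)`. -/
def GStr (N : ℕ) (p q : ℕ) : Op (Fin N) :=
  (XProd fun i => if lbl i = p ∨ lbl i = q then 1 else 0) *
    ZProd fun i => if p < lbl i ∧ lbl i < q ∧ ¬(lbl i % 2 = p % 2) then 1 else 0

/-- `G1 = ∏_{i even} Z i` (even labels). -/
def Gsym1 (N : ℕ) : Op (Fin N) := ZProd fun i => if lbl i % 2 = 0 then 1 else 0

/-- `G2 = ∏_{i odd} Z i` (odd labels). -/
def Gsym2 (N : ℕ) : Op (Fin N) := ZProd fun i => if lbl i % 2 = 1 then 1 else 0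

/-- The measurement channel `𝓔_S(ρ) = Π₊ ρ Π₊ + Π₋ ρ Π₋` with `Π± = (I ± S)/2`. -/
def measChannel (S ρ : Op ι) : Op ι :=
  ((2 : ℂ)⁻¹ • (1 + S)) * ρ * ((2 : ℂ)⁻¹ • (1 + S)) +
    ((2 : ℂ)⁻¹ • (1 - S)) * ρ * ((2 : ℂ)⁻¹ • (1 - S))

/-- Measurement-update map on stabilizer groups: if the measured Pauli `M` commutes with
every element of `G` the group is unchanged; otherwise the new group is generated by the
centralizer `C_G(M)` together with `ε • M` (where `ε` is the measurement outcome sign). -/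
def Meas (G : Submonoid (Op ι)) (M : Op ι) (ε : ℂ) : Submonoid (Op ι) :=
  if ∀ g ∈ G, M * g = g * M then G
  else Submonoid.closure ({g | g ∈ G ∧ M * g = g * M} ∪ {ε • M})

/-- The isolated-SPT stabilizer set `𝒮(A)`: the string operators `g_{q_i, q_{i+1}}` between
consecutive elements of `A`, together with the total `Z`-product `∏_{p ∈ A} Z p`. -/
def SPTstabs (N : ℕ) (A : Finset ℕ) : Set (Op (Fin N)) :=
  {m | (∃ p ∈ A, ∃ q ∈ A, p < q ∧ (∀ r ∈ A, ¬(p < r ∧ r < q)) ∧ m = GStr N p q) ∨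
    m = ZProd fun i => if lbl i ∈ A then 1 else 0}

/-- The block of the partition `P` containing `x`. -/
def blockOf (P : Finset (Finset ℕ)) (x : ℕ) : Finset ℕ :=
  P.sup fun A => if x ∈ A then A else ∅

/-- Partition update for the move “measure `Z i`”: `i` is split off into its own block. -/
def updZ (P : Finset (Finset ℕ)) (i : ℕ) : Finset (Finset ℕ) :=
  insert {i} ((P.image fun A => A.erase i).erase ∅)

/-- Partition update for the move “measure `g i`”: the blocks of `i−1` and `i+1` merge. -/
def updG (P : Finset (Finset ℕ)) (i : ℕ) : Finset (Finset ℕ) :=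
  insert (blockOf P (i - 1) ∪ blockOf P (i + 1))
    ((P.erase (blockOf P (i - 1))).erase (blockOf P (i + 1)))

/-- The partition of `{1, …, N}` into singletons. -/
def startPart (N : ℕ) : Finset (Finset ℕ) := (Finset.Icc 1 N).image fun i => {i}

/-- The matrix `M`, supported on `A`, viewed as an operator on the qubits in `A` only. -/
def restrictOp (A : Finset ι) (M : Op ι) : Matrix (↥A → Fin 2) (↥A → Fin 2) ℂ :=
  Matrix.of fun f g =>
    M (fun i => if hi : i ∈ A then f ⟨i, hi⟩ else 0)
      (fun i => if hi : i ∈ A then g ⟨i, hi⟩ else 0)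


/-! ### Auxiliary machinery for the proof -/

/-- The matrix of `∏ X_i^{a_i}` in closed form. -/
def Xmat (a : ι → Fin 2) : Op ι :=
  Matrix.of fun f g => if f = g + a then 1 else 0

/-- The diagonal phase `∏ i (-1)^{b i * f i}`. -/
def zval (b f : ι → Fin 2) : ℂ :=
  ∏ i, (-1 : ℂ) ^ ((b i : ℕ) * (f i : ℕ))

/-- The matrix of `∏ Z_i^{b_i}` in closed form. -/
def Zmat (b : ι → Fin 2) : Op ι :=
  Matrix.of fun f g => if f = g then zval b f else 0

lemma zfac_add (b x y : Fin 2) :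
    (-1 : ℂ) ^ ((b : ℕ) * (((x + y) : Fin 2) : ℕ))
      = (-1) ^ ((b : ℕ) * (x : ℕ)) * (-1) ^ ((b : ℕ) * (y : ℕ)) := by
  fin_cases b <;> fin_cases x <;> fin_cases y <;>
    norm_num [show ((2 : Fin 2) : ℕ) = 0 from rfl, show ((1 + 1 : Fin 2) : ℕ) = 0 from rfl]

lemma zval_add_right (b f g : ι → Fin 2) :
    zval b (f + g) = zval b f * zval b g := by
  unfold zval
  rw [← Finset.prod_mul_distrib]
  exact Finset.prod_congr rfl fun i _ => zfac_add (b i) (f i) (g i)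

lemma zval_comm (b f : ι → Fin 2) : zval b f = zval f b := by
  unfold zval; exact Finset.prod_congr rfl fun i _ => by rw [Nat.mul_comm]

lemma zval_add_left (b c f : ι → Fin 2) :
    zval (b + c) f = zval b f * zval c f := by
  rw [zval_comm, zval_add_right, zval_comm f b, zval_comm f c]

@[simp] lemma zval_zero_right (b : ι → Fin 2) : zval b 0 = 1 := by
  unfold zval; simp

@[simp] lemma zval_zero_left (f : ι → Fin 2) : zval 0 f = 1 := by
  unfold zval; simp

lemma zval_eq_one_or_neg_one (b f : ι → Fin 2) : zval b f = 1 ∨ zval b f = -1 := by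
  unfold zval
  refine Finset.prod_induction _ (fun x => x = 1 ∨ x = -1) ?_ (Or.inl rfl) ?_
  · rintro x y (rfl | rfl) (rfl | rfl) <;> norm_num
  · intro i _
    rcases Nat.even_or_odd ((b i : ℕ) * (f i : ℕ)) with h | h
    · exact Or.inl (h.neg_one_pow)
    · exact Or.inr (h.neg_one_pow)

@[simp] lemma Xmat_zero : Xmat (0 : ι → Fin 2) = 1 := by
  ext f g
  simp [Xmat, Matrix.one_apply, eq_comm]

@[simp] lemma Zmat_zero : Zmat (0 : ι → Fin 2) = 1 := by
  ext f g
  by_cases h : f = g <;> simp [Zmat, Matrix.one_apply, h]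

lemma fin2_add_self (x : Fin 2) : x + x = 0 := by fin_cases x <;> rfl

lemma neg_add_self_fin (a : ι → Fin 2) : a + a = 0 := by
  funext i; exact fin2_add_self (a i)

lemma add_right_cancel_fin {f g a : ι → Fin 2} : f = g + a ↔ f + a = g := by
  constructor
  · rintro rfl; rw [add_assoc, neg_add_self_fin, add_zero]
  · rintro rfl; rw [add_assoc, neg_add_self_fin, add_zero]

lemma Xmat_mul (a a' : ι → Fin 2) : Xmat a * Xmat a' = Xmat (a + a') := by
  ext f g
  simp only [Xmat, Matrix.mul_apply, Matrix.of_apply]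
  rw [Finset.sum_eq_single (g + a')]
  · have hgg : g + a' + a = g + (a + a') := by rw [add_assoc, add_comm a' a]
    rw [hgg]; simp
  · intro k _ hk
    simp [hk]
  · simp

lemma Zmat_mul (b b' : ι → Fin 2) : Zmat b * Zmat b' = Zmat (b + b') := by
  ext f g
  simp only [Zmat, Matrix.mul_apply, Matrix.of_apply]
  rw [Finset.sum_eq_single f]
  · by_cases h : f = g <;> simp [h, zval_add_left]
  · intro k _ hk; simp [Ne.symm hk]
  · simp

lemma XZ_apply (a b : ι → Fin 2) (f g : ι → Fin 2) :
    (Xmat a * Zmat b) f g = if f = g + a then zval b g else 0 := by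
  simp only [Xmat, Zmat, Matrix.mul_apply, Matrix.of_apply]
  rw [Finset.sum_eq_single g]
  · by_cases h : f = g + a <;> simp [h]
  · intro k _ hk; simp [hk]
  · simp

lemma ZX_apply (a b : ι → Fin 2) (f g : ι → Fin 2) :
    (Zmat b * Xmat a) f g = if f = g + a then zval b f else 0 := by
  simp only [Zmat, Xmat, Matrix.mul_apply, Matrix.of_apply]
  rw [Finset.sum_eq_single f]
  · by_cases h : f = g + a <;> simp [h]
  · intro k _ hk; simp [Ne.symm hk]
  · simp

lemma Zmat_mul_Xmat (a b : ι → Fin 2) :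
    Zmat b * Xmat a = zval b a • (Xmat a * Zmat b) := by
  ext f g
  rw [ZX_apply, Matrix.smul_apply, XZ_apply]
  by_cases h : f = g + a
  · subst h; simp [zval_add_right]; ring
  · simp [h]


/-! ### Product formulas -/

lemma PX_eq (i : ι) : PX i = Xmat (Pi.single i 1) := by
  ext f g
  have h : Function.update g i (g i + 1) = g + Pi.single i 1 := by
    funext j
    by_cases hj : j = i
    · subst hj; simp [Function.update, Pi.single]
    · simp [Function.update, hj, Pi.single_eq_of_ne hj]
  simp [PX, Xmat, h]

lemma PZ_eq (i : ι) : PZ i = Zmat (Pi.single i 1) := by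
  ext f g
  by_cases h : f = g
  · subst h
    have : zval (Pi.single i 1) f = (-1 : ℂ) ^ ((f i : ℕ)) := by
      unfold zval
      rw [Finset.prod_eq_single i]
      · simp
      · intro j _ hj; simp [Pi.single_eq_of_ne hj]
      · simp
    simp [PZ, Zmat, this]
  · simp [PZ, Zmat, h]

lemma PX_pow_eq (i : ι) (v : Fin 2) : PX i ^ (v : ℕ) = Xmat (Pi.single i v) := by
  fin_cases v
  · simp
  · simpa using PX_eq i

lemma PZ_pow_eq (i : ι) (v : Fin 2) : PZ i ^ (v : ℕ) = Zmat (Pi.single i v) := by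
  fin_cases v
  · simp
  · simpa using PZ_eq i

lemma prod_map_Xmat (l : List ι) (v : ι → (ι → Fin 2)) :
    (l.map fun i => Xmat (v i)).prod = Xmat ((l.map v).sum) := by
  induction l with
  | nil => simp
  | cons x t ih => simp [ih, Xmat_mul]

lemma prod_map_Zmat (l : List ι) (v : ι → (ι → Fin 2)) :
    (l.map fun i => Zmat (v i)).prod = Zmat ((l.map v).sum) := by
  induction l with
  | nil => simp
  | cons x t ih => simp [ih, Zmat_mul]

lemma XProd_eq (a : ι → Fin 2) : XProd a = Xmat a := by
  unfold XProd
  have h1 : (Finset.univ.toList.map fun i => PX (ι := ι) i ^ ((a i : ℕ)))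
      = Finset.univ.toList.map fun i => Xmat (Pi.single i (a i)) := by
    simp [PX_pow_eq]
  rw [h1, prod_map_Xmat]
  congr 1
  rw [Finset.sum_map_toList, Finset.univ_sum_single]

lemma ZProd_eq (b : ι → Fin 2) : ZProd b = Zmat b := by
  unfold ZProd
  have h1 : (Finset.univ.toList.map fun i => PZ (ι := ι) i ^ ((b i : ℕ)))
      = Finset.univ.toList.map fun i => Zmat (Pi.single i (b i)) := by
    simp [PZ_pow_eq]
  rw [h1, prod_map_Zmat]
  congr 1
  rw [Finset.sum_map_toList, Finset.univ_sum_single]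

/-! ### Pauli strings in normal form -/

/-- Normal-form predicate for Pauli strings. -/
lemma isPauli_iff (M : Op ι) :
    IsPauli M ↔ ∃ (c : ℂ) (a b : ι → Fin 2), IsPhase c ∧ M = c • (Xmat a * Zmat b) := by
  unfold IsPauli
  constructor
  · rintro ⟨c, a, b, hc, rfl⟩; exact ⟨c, a, b, hc, by rw [XProd_eq, ZProd_eq]⟩
  · rintro ⟨c, a, b, hc, rfl⟩; exact ⟨c, a, b, hc, by rw [XProd_eq, ZProd_eq]⟩

lemma isPhase_mul {c c' : ℂ} (h : IsPhase c) (h' : IsPhase c') : IsPhase (c * c') := by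
  unfold IsPhase at *
  rcases h with rfl | rfl | rfl | rfl <;> rcases h' with rfl | rfl | rfl | rfl <;>
    simp [Complex.I_mul_I] <;> ring_nf <;> simp [Complex.I_sq] <;> tauto

lemma isPhase_neg {c : ℂ} (h : IsPhase c) : IsPhase (-c) := by
  unfold IsPhase at *
  rcases h with rfl | rfl | rfl | rfl <;> simp <;> tauto

lemma isPhase_of_pm {c : ℂ} (h : c = 1 ∨ c = -1) : IsPhase c := by
  rcases h with rfl | rfl
  · exact Or.inl rfl
  · exact Or.inr (Or.inl rfl)

/-- Product of two normal-form Pauli strings. -/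
lemma pauli_mul_formula (c c' : ℂ) (a b a' b' : ι → Fin 2) :
    (c • (Xmat a * Zmat b)) * (c' • (Xmat a' * Zmat b'))
      = (c * c' * zval b a') • (Xmat (a + a') * Zmat (b + b')) := by
  rw [smul_mul_assoc, mul_smul_comm, smul_smul]
  rw [mul_assoc (Xmat a), ← mul_assoc (Zmat b), Zmat_mul_Xmat]
  rw [smul_mul_assoc, mul_smul_comm, smul_smul, mul_comm c c']
  rw [mul_assoc (Xmat a'), Zmat_mul, ← mul_assoc, Xmat_mul]


/-! ### Trace lemmas -/

lemma trace_one_op : Matrix.trace (1 : Op ι) = (2 : ℂ) ^ Fintype.card ι := by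
  rw [Matrix.trace_one]
  norm_num [Fintype.card_fun]

lemma self_ne_add_of_ne_zero {f a : ι → Fin 2} (ha : a ≠ 0) : f ≠ f + a := by
  intro h
  apply ha
  have : f + 0 = f + a := by rw [add_zero]; exact h
  exact (add_left_cancel this).symm

lemma zval_single_one (b : ι → Fin 2) (j : ι) :
    zval b (Pi.single j 1) = (-1 : ℂ) ^ ((b j : ℕ)) := by
  unfold zval
  rw [Finset.prod_eq_single j]
  · simp
  · intro i _ hi; simp [Pi.single_eq_of_ne hi]
  · simp

lemma sum_zval_eq_zero {b : ι → Fin 2} (hb : b ≠ 0) :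
    ∑ f : ι → Fin 2, zval b f = 0 := by
  have ⟨j, hj⟩ : ∃ j, b j ≠ 0 := by
    by_contra h
    push_neg at h
    exact hb (funext h)
  have hj1 : b j = 1 := by omega
  apply Finset.sum_involution (fun f _ => f + Pi.single j 1)
  · intro f _
    rw [zval_add_right, zval_single_one, hj1]
    norm_num
  · intro f _ hf hgf
    have : f + Pi.single j 1 ≠ f := by
      intro h
      have := self_ne_add_of_ne_zero (f := f) (a := Pi.single j 1) ?_
      · exact this h.symm
      · intro h0
        have := congrFun h0 j
        simp at this
    exact this hgf
  · intro f _
    rw [add_assoc, neg_add_self_fin, add_zero]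
  · intro a _
    exact Finset.mem_univ _

lemma trace_pauli_nf (c : ℂ) (a b : ι → Fin 2) (h : a ≠ 0 ∨ b ≠ 0) :
    Matrix.trace (c • (Xmat a * Zmat b)) = 0 := by
  rw [Matrix.trace_smul]
  rw [show Matrix.trace (Xmat a * Zmat b) = ∑ f, (Xmat a * Zmat b) f f from rfl]
  by_cases ha : a = 0
  · subst ha
    rcases h with h | hb
    · exact absurd rfl h
    · have hd : ∀ f : ι → Fin 2, (Xmat (0 : ι → Fin 2) * Zmat b) f f = zval b f := by
        intro f; rw [XZ_apply, add_zero, if_pos rfl]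
      rw [Finset.sum_congr rfl fun f _ => hd f, sum_zval_eq_zero hb, smul_zero]
  · have : ∀ f : ι → Fin 2, (Xmat a * Zmat b) f f = 0 := by
      intro f
      rw [XZ_apply]
      exact if_neg (self_ne_add_of_ne_zero ha)
    simp [this]

/-! ### The stabilizer group -/

section Stab

variable {N : ℕ} (s : Fin N → Op ι) (hcomm : ∀ i j, Commute (s i) (s j))

lemma symmDiff_singleton_not_mem {T : Finset (Fin N)} {i : Fin N} (hi : i ∉ T) :
    symmDiff T {i} = insert i T := by
  ext x
  simp only [Finset.mem_symmDiff, Finset.mem_singleton, Finset.mem_insert]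
  constructor
  · rintro (⟨hx, _⟩ | ⟨rfl, _⟩) <;> tauto
  · rintro (rfl | hx)
    · exact Or.inr ⟨rfl, hi⟩
    · exact Or.inl ⟨hx, fun h => hi (h ▸ hx)⟩

lemma symmDiff_singleton_mem {T : Finset (Fin N)} {i : Fin N} (hi : i ∈ T) :
    symmDiff T {i} = T.erase i := by
  ext x
  simp only [Finset.mem_symmDiff, Finset.mem_singleton, Finset.mem_erase]
  constructor
  · rintro (⟨hx, hne⟩ | ⟨rfl, hx⟩) <;> tauto
  · rintro ⟨hne, hx⟩; exact Or.inl ⟨hx, hne⟩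

include hcomm


lemma pairwise_commute_list (l : List (Fin N)) : (l.map s).Pairwise Commute := by
  induction l with
  | nil => simp
  | cons x t ih =>
    rw [List.map_cons, List.pairwise_cons]
    refine ⟨?_, ih⟩
    rintro b hb
    obtain ⟨j, _, rfl⟩ := List.mem_map.mp hb
    exact hcomm x j

lemma subProd_eq_toList (T : Finset (Fin N)) :
    subProd s T = (T.toList.map s).prod :=
  ((Finset.sort_perm_toList T (· ≤ ·)).map s).prod_eq' (pairwise_commute_list s hcomm _)

lemma P_commute (T : Finset (Fin N)) (i : Fin N) :
    Commute (s i) (subProd s T) := by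
  rw [subProd_eq_toList s hcomm]
  apply Commute.list_prod_right
  intro x hx
  obtain ⟨j, _, rfl⟩ := List.mem_map.mp hx
  exact hcomm i j

lemma P_empty : subProd s (∅ : Finset (Fin N)) = 1 := by
  rw [subProd_eq_toList s hcomm, Finset.toList_empty]
  simp

lemma P_insert {T : Finset (Fin N)} {i : Fin N} (hi : i ∉ T) :
    subProd s (insert i T) = s i * subProd s T := by
  rw [subProd_eq_toList s hcomm, subProd_eq_toList s hcomm]
  rw [((Finset.toList_insert hi).map s).prod_eq'
    (pairwise_commute_list s hcomm _), List.map_cons, List.prod_cons]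

lemma P_singleton (i : Fin N) : subProd s {i} = s i := by
  rw [subProd_eq_toList s hcomm, Finset.toList_singleton]
  simp

lemma P_mul_single (hsq : ∀ i, s i * s i = 1) (T : Finset (Fin N)) (i : Fin N) :
    subProd s T * s i = subProd s (symmDiff T {i}) := by
  by_cases hi : i ∈ T
  · rw [symmDiff_singleton_mem hi]
    have hT : subProd s T = s i * subProd s (T.erase i) := by
      conv_lhs => rw [← Finset.insert_erase hi]
      exact P_insert s hcomm (Finset.notMem_erase i T)
    rw [hT, mul_assoc, ← (P_commute s hcomm (T.erase i) i).eq, ← mul_assoc, hsq, one_mul]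
  · rw [symmDiff_singleton_not_mem hi, P_insert s hcomm hi,
      ← (P_commute s hcomm T i).eq]

lemma P_mul (hsq : ∀ i, s i * s i = 1) (T T' : Finset (Fin N)) :
    subProd s T * subProd s T' = subProd s (symmDiff T T') := by
  induction T' using Finset.induction_on with
  | empty => rw [P_empty s hcomm, mul_one, ← Finset.bot_eq_empty, symmDiff_bot]
  | @insert a T' ha ih =>
    rw [P_insert s hcomm ha, (P_commute s hcomm T' a).eq, ← mul_assoc, ih,
      P_mul_single s hcomm hsq, symmDiff_assoc, symmDiff_singleton_not_mem ha]

lemma mem_closure_iff_subProd (g : Op ι) (hsq : ∀ i, s i * s i = 1) :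
    g ∈ Submonoid.closure (Set.range s) ↔ ∃ T, g = subProd s T := by
  constructor
  · intro hg
    induction hg using Submonoid.closure_induction with
    | mem x hx =>
      obtain ⟨i, rfl⟩ := hx
      exact ⟨{i}, (P_singleton s hcomm i).symm⟩
    | one => exact ⟨∅, (P_empty s hcomm).symm⟩
    | mul x y _ _ hx hy =>
      obtain ⟨T, rfl⟩ := hx
      obtain ⟨T', rfl⟩ := hy
      exact ⟨symmDiff T T', P_mul s hcomm hsq T T'⟩
  · rintro ⟨T, rfl⟩
    rw [subProd_eq_toList s hcomm]
    apply Submonoid.list_prod_mem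
    intro x hx
    obtain ⟨j, _, rfl⟩ := List.mem_map.mp hx
    exact Submonoid.subset_closure (Set.mem_range_self j)

lemma subProd_isHermitian (hherm : ∀ i, (s i).IsHermitian) (T : Finset (Fin N)) :
    (subProd s T).IsHermitian := by
  induction T using Finset.induction_on with
  | empty => rw [P_empty s hcomm]; exact Matrix.isHermitian_one
  | @insert a T' ha ih =>
    rw [P_insert s hcomm ha]
    unfold Matrix.IsHermitian at *
    rw [Matrix.conjTranspose_mul, ih, hherm, ← (P_commute s hcomm T' a).eq]

end Stab


/-! ### Hermitian Pauli strings square to one -/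

lemma re_trace_conjTranspose_mul_self_nonneg (M : Op ι) :
    0 ≤ (Matrix.trace (Mᴴ * M)).re := by
  have h : Matrix.trace (Mᴴ * M) = ∑ f, ∑ g, ((Complex.normSq (M g f) : ℂ)) := by
    unfold Matrix.trace
    refine Finset.sum_congr rfl fun f _ => ?_
    rw [Matrix.diag_apply, Matrix.mul_apply]
    refine Finset.sum_congr rfl fun g _ => ?_
    rw [Matrix.conjTranspose_apply, Complex.normSq_eq_conj_mul_self]
    rfl
  rw [h]
  push_cast
  rw [Complex.re_sum]
  apply Finset.sum_nonneg
  intro f _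
  rw [Complex.re_sum]
  apply Finset.sum_nonneg
  intro g _
  simpa using Complex.normSq_nonneg (M g f)

lemma entries_zero_of_herm_idem_trace_zero {M : Op ι} (hh : M.IsHermitian)
    (hi : M * M = M) (ht : Matrix.trace M = 0) : M = 0 := by
  have h1 : Matrix.trace (Mᴴ * M) = 0 := by
    rw [hh.eq, hi, ht]
  have h2 : ∀ f g, Complex.normSq (M g f) = 0 := by
    have hsum : ∑ f, ∑ g, Complex.normSq (M g f) = 0 := by
      have := congrArg Complex.re h1
      rw [show Matrix.trace (Mᴴ * M) = ∑ f, ∑ g, ((Complex.normSq (M g f) : ℂ)) from ?_] at this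
      · push_cast at this
        rw [Complex.re_sum] at this
        simpa [Complex.re_sum] using this
      · unfold Matrix.trace
        refine Finset.sum_congr rfl fun f _ => ?_
        rw [Matrix.diag_apply, Matrix.mul_apply]
        refine Finset.sum_congr rfl fun g _ => ?_
        rw [Matrix.conjTranspose_apply, Complex.normSq_eq_conj_mul_self]
        rfl
    intro f g
    have hnn : ∀ f ∈ (Finset.univ : Finset (ι → Fin 2)),
        0 ≤ ∑ g, Complex.normSq (M g f) :=
      fun f _ => Finset.sum_nonneg fun g _ => Complex.normSq_nonneg _
    have h3 := (Finset.sum_eq_zero_iff_of_nonneg hnn).mp hsum f (Finset.mem_univ f)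
    have hnn2 : ∀ g ∈ (Finset.univ : Finset (ι → Fin 2)),
        0 ≤ Complex.normSq (M g f) := fun g _ => Complex.normSq_nonneg _
    exact (Finset.sum_eq_zero_iff_of_nonneg hnn2).mp h3 g (Finset.mem_univ g)
  ext f g
  simpa using Complex.normSq_eq_zero.mp (h2 g f)

lemma phase_sq (c : ℂ) (hc : IsPhase c) : c * c = 1 ∨ c * c = -1 := by
  rcases hc with rfl | rfl | rfl | rfl <;> norm_num [Complex.I_mul_I]

lemma pauli_sq_eq_one {M : Op ι} (h : ∃ c a b, IsPhase c ∧ M = c • (Xmat a * Zmat b))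
    (hh : M.IsHermitian) : M * M = 1 := by
  obtain ⟨c, a, b, hc, rfl⟩ := h
  rw [pauli_mul_formula, neg_add_self_fin, neg_add_self_fin, Xmat_zero, Zmat_zero, mul_one]
  have hε : c * c * zval b a = 1 ∨ c * c * zval b a = -1 := by
    rcases phase_sq c hc with h1 | h1 <;> rcases zval_eq_one_or_neg_one b a with h2 | h2 <;>
      rw [h1, h2] <;> norm_num
  rcases hε with hε | hε
  · rw [hε, one_smul]
  · exfalso
    set M := c • (Xmat a * Zmat b) with hM
    have hsq : M * M = -1 := by
      rw [hM, pauli_mul_formula, neg_add_self_fin, neg_add_self_fin, Xmat_zero, Zmat_zero,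
        mul_one, hε]
      simp
    have htr : Matrix.trace (Mᴴ * M) = -(2 : ℂ) ^ Fintype.card ι := by
      rw [hh.eq, hsq, Matrix.trace_neg, trace_one_op]
    have := re_trace_conjTranspose_mul_self_nonneg M
    rw [htr] at this
    simp only [Complex.neg_re] at this
    have h2 : ((2 : ℂ) ^ Fintype.card ι).re = (2 : ℝ) ^ Fintype.card ι := by
      norm_cast
    rw [h2] at this
    nlinarith [pow_pos (by norm_num : (0:ℝ) < 2) (Fintype.card ι)]

lemma isPauli_nf_one : ∃ c a b, IsPhase (c : ℂ) ∧
    (1 : Op ι) = c • (Xmat a * Zmat b) := by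
  exact ⟨1, 0, 0, Or.inl rfl, by simp⟩

lemma isPauli_nf_mul {M M' : Op ι}
    (h : ∃ c a b, IsPhase c ∧ M = c • (Xmat a * Zmat b))
    (h' : ∃ c a b, IsPhase c ∧ M' = c • (Xmat a * Zmat b)) :
    ∃ c a b, IsPhase c ∧ M * M' = c • (Xmat a * Zmat b) := by
  obtain ⟨c, a, b, hc, rfl⟩ := h
  obtain ⟨c', a', b', hc', rfl⟩ := h'
  refine ⟨c * c' * zval b a', a + a', b + b', ?_, pauli_mul_formula c c' a b a' b'⟩
  exact isPhase_mul (isPhase_mul hc hc') (isPhase_of_pm (zval_eq_one_or_neg_one b a'))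

lemma conj_phase_eq_self {c : ℂ} (hc : IsPhase c) (hr : (starRingEnd ℂ) c = c) :
    c = 1 ∨ c = -1 := by
  rcases hc with rfl | rfl | rfl | rfl
  · exact Or.inl rfl
  · exact Or.inr rfl
  · exfalso; rw [Complex.conj_I] at hr
    have : (2 : ℂ) * Complex.I = 0 := by linear_combination -hr
    simpa [Complex.I_ne_zero] using this
  · exfalso; rw [map_neg, Complex.conj_I, neg_neg] at hr
    have : (2 : ℂ) * Complex.I = 0 := by linear_combination hr
    simpa [Complex.I_ne_zero] using this


/-! ### Partial trace of Pauli strings -/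

lemma fin2_self_ne_add {x v : Fin 2} (hv : v ≠ 0) : x ≠ x + v := by
  fin_cases x <;> fin_cases v <;> simp_all <;> decide

lemma combine_mem {A : Finset ι} (f : ↥A → Fin 2) (h : ↥(Aᶜ) → Fin 2) {i : ι}
    (hi : i ∈ A) : combine A f h i = f ⟨i, hi⟩ := dif_pos hi

lemma combine_not_mem {A : Finset ι} (f : ↥A → Fin 2) (h : ↥(Aᶜ) → Fin 2) {i : ι}
    (hi : i ∉ A) : combine A f h i = h ⟨i, Finset.mem_compl.mpr hi⟩ := dif_neg hi

/-- The on-`A` matching condition. -/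
def CondA (A : Finset ι) (a : ι → Fin 2) (f g : ↥A → Fin 2) : Prop :=
  ∀ (i : ι) (hi : i ∈ A), f ⟨i, hi⟩ = g ⟨i, hi⟩ + a i

lemma combine_cond {A : Finset ι} {a : ι → Fin 2} (ha0 : ∀ i ∉ A, a i = 0)
    (f g : ↥A → Fin 2) (h : ↥(Aᶜ) → Fin 2) :
    combine A f h = combine A g h + a ↔ CondA A a f g := by
  rw [funext_iff]
  constructor
  · intro H i hi
    have := H i
    rwa [Pi.add_apply, combine_mem f h hi, combine_mem g h hi] at this
  · intro H i
    by_cases hi : i ∈ A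
    · rw [Pi.add_apply, combine_mem f h hi, combine_mem g h hi]
      exact H i hi
    · rw [Pi.add_apply, combine_not_mem f h hi, combine_not_mem g h hi, ha0 i hi, add_zero]

lemma zval_combine (A : Finset ι) (b : ι → Fin 2) (g : ↥A → Fin 2) (h : ↥(Aᶜ) → Fin 2) :
    zval b (combine A g h)
      = (∏ i : ↥A, (-1 : ℂ) ^ ((b i.1 : ℕ) * (g i : ℕ)))
        * ∏ j : ↥(Aᶜ), (-1 : ℂ) ^ ((b j.1 : ℕ) * (h j : ℕ)) := by
  unfold zval
  rw [← Finset.prod_mul_prod_compl A]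
  congr 1
  · rw [Finset.univ_eq_attach, ← Finset.prod_attach A
      (fun i => (-1 : ℂ) ^ ((b i : ℕ) * ((combine A g h i) : ℕ)))]
    refine Finset.prod_congr rfl fun i _ => ?_
    rw [combine_mem g h i.2]
  · rw [Finset.univ_eq_attach, ← Finset.prod_attach Aᶜ
      (fun i => (-1 : ℂ) ^ ((b i : ℕ) * ((combine A g h i) : ℕ)))]
    refine Finset.prod_congr rfl fun j _ => ?_
    have hj : j.1 ∉ A := Finset.mem_compl.mp j.2
    rw [combine_not_mem g h hj]

lemma sum_zval_combine (A : Finset ι) (b : ι → Fin 2) (g : ↥A → Fin 2) :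
    ∑ h : ↥(Aᶜ) → Fin 2, zval b (combine A g h)
      = (∏ i : ↥A, (-1 : ℂ) ^ ((b i.1 : ℕ) * (g i : ℕ)))
        * ∏ j : ↥(Aᶜ), (∑ x : Fin 2, (-1 : ℂ) ^ ((b j.1 : ℕ) * (x : ℕ))) := by
  rw [Finset.sum_congr rfl fun h _ => zval_combine A b g h, ← Finset.mul_sum]
  congr 1
  rw [Finset.prod_univ_sum]
  rw [show (Fintype.piFinset fun _ : ↥(Aᶜ) => (Finset.univ : Finset (Fin 2)))
    = Finset.univ from Fintype.piFinset_univ]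

lemma ptrace_entry (A : Finset ι) (c : ℂ) (a b : ι → Fin 2) (f g : ↥A → Fin 2)
    (ha0 : ∀ i ∉ A, a i = 0) :
    ptrace A (c • (Xmat a * Zmat b)) f g
      = c * (if CondA A a f g then ∑ h : ↥(Aᶜ) → Fin 2, zval b (combine A g h) else 0) := by
  unfold ptrace
  rw [Matrix.of_apply]
  have hterm : ∀ h : ↥(Aᶜ) → Fin 2,
      (c • (Xmat a * Zmat b)) (combine A f h) (combine A g h)
        = c * (if CondA A a f g then zval b (combine A g h) else 0) := by
    intro h
    rw [Matrix.smul_apply, XZ_apply, smul_eq_mul]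
    congr 1
    exact if_congr (combine_cond ha0 f g h) rfl rfl
  rw [Finset.sum_congr rfl fun h _ => hterm h]
  by_cases hc : CondA A a f g
  · simp only [if_pos hc, ← Finset.mul_sum]
  · simp [if_neg hc]

lemma ptrace_pauli_xbad (A : Finset ι) (c : ℂ) (a b : ι → Fin 2) {i : ι}
    (hi : i ∉ A) (hai : a i ≠ 0) :
    ptrace A (c • (Xmat a * Zmat b)) = 0 := by
  ext f g
  unfold ptrace
  rw [Matrix.of_apply, Matrix.zero_apply]
  apply Finset.sum_eq_zero
  intro h _
  rw [Matrix.smul_apply, XZ_apply, smul_eq_mul]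
  rw [if_neg, mul_zero]
  intro hcond
  have := congrFun hcond i
  rw [Pi.add_apply, combine_not_mem f h hi, combine_not_mem g h hi] at this
  exact fin2_self_ne_add hai this

lemma ptrace_pauli_zbad (A : Finset ι) (c : ℂ) (a b : ι → Fin 2)
    (ha0 : ∀ i ∉ A, a i = 0) {i : ι} (hi : i ∉ A) (hbi : b i ≠ 0) :
    ptrace A (c • (Xmat a * Zmat b)) = 0 := by
  ext f g
  rw [ptrace_entry A c a b f g ha0, Matrix.zero_apply]
  rw [sum_zval_combine A b g]
  have hzero : (∏ j : ↥(Aᶜ), (∑ x : Fin 2, (-1 : ℂ) ^ ((b j.1 : ℕ) * (x : ℕ)))) = 0 := by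
    apply Finset.prod_eq_zero (Finset.mem_univ (⟨i, Finset.mem_compl.mpr hi⟩ : ↥(Aᶜ)))
    have hb1 : b i = 1 := by omega
    rw [Fin.sum_univ_two]
    norm_num [hb1]
  rw [hzero, mul_zero]
  simp

lemma restrictOp_entry (A : Finset ι) (c : ℂ) (a b : ι → Fin 2) (f g : ↥A → Fin 2)
    (ha0 : ∀ i ∉ A, a i = 0) (hb0 : ∀ i ∉ A, b i = 0) :
    restrictOp A (c • (Xmat a * Zmat b)) f g
      = c * (if CondA A a f g then (∏ i : ↥A, (-1 : ℂ) ^ ((b i.1 : ℕ) * (g i : ℕ))) else 0) := by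
  unfold restrictOp
  rw [Matrix.of_apply, Matrix.smul_apply, XZ_apply, smul_eq_mul]
  congr 1
  have hcond : ((fun i => if hi : i ∈ A then f ⟨i, hi⟩ else 0)
      = (fun i => if hi : i ∈ A then g ⟨i, hi⟩ else 0) + a) ↔ CondA A a f g := by
    rw [funext_iff]
    constructor
    · intro H i hi
      have := H i
      rwa [Pi.add_apply, dif_pos hi, dif_pos hi] at this
    · intro H i
      by_cases hi : i ∈ A
      · rw [Pi.add_apply, dif_pos hi, dif_pos hi]; exact H i hi
      · rw [Pi.add_apply, dif_neg hi, dif_neg hi, ha0 i hi, add_zero]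
  have hz : zval b (fun i => if hi : i ∈ A then g ⟨i, hi⟩ else 0)
      = ∏ i : ↥A, (-1 : ℂ) ^ ((b i.1 : ℕ) * (g i : ℕ)) := by
    unfold zval
    rw [← Finset.prod_mul_prod_compl A]
    have h2 : (∏ i ∈ Aᶜ, (-1 : ℂ) ^ ((b i : ℕ)
        * (((fun i => if hi : i ∈ A then g ⟨i, hi⟩ else 0) i : Fin 2) : ℕ))) = 1 := by
      apply Finset.prod_eq_one
      intro i hi
      rw [hb0 i (Finset.mem_compl.mp hi)]
      simp
    rw [h2, mul_one, Finset.univ_eq_attach, ← Finset.prod_attach A]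
    refine Finset.prod_congr rfl fun i _ => ?_
    have hbb : (fun j => if hj : j ∈ A then g ⟨j, hj⟩ else 0) i.1 = g i := dif_pos i.2
    rw [hbb]
  rw [hz]
  exact if_congr hcond rfl rfl

lemma ptrace_pauli_supported (A : Finset ι) (c : ℂ) (a b : ι → Fin 2)
    (ha0 : ∀ i ∉ A, a i = 0) (hb0 : ∀ i ∉ A, b i = 0) :
    ptrace A (c • (Xmat a * Zmat b))
      = ((2 : ℂ) ^ (Aᶜ.card)) • restrictOp A (c • (Xmat a * Zmat b)) := by
  ext f g
  rw [ptrace_entry A c a b f g ha0, Matrix.smul_apply,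
    restrictOp_entry A c a b f g ha0 hb0, sum_zval_combine A b g]
  have h2 : (∏ j : ↥(Aᶜ), (∑ x : Fin 2, (-1 : ℂ) ^ ((b j.1 : ℕ) * (x : ℕ))))
      = (2 : ℂ) ^ (Aᶜ.card) := by
    have : ∀ j : ↥(Aᶜ), (∑ x : Fin 2, (-1 : ℂ) ^ ((b j.1 : ℕ) * (x : ℕ))) = 2 := by
      intro j
      rw [hb0 j.1 (Finset.mem_compl.mp j.2)]
      rw [Fin.sum_univ_two]
      norm_num
    rw [Finset.prod_congr rfl fun j _ => this j, Finset.prod_const, Finset.card_univ,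
      Fintype.card_coe]
  rw [h2]
  by_cases hc : CondA A a f g
  · rw [if_pos hc, if_pos hc, smul_eq_mul]; ring
  · rw [if_neg hc, if_neg hc, smul_eq_mul]; ring


/-! ### Small glue lemmas for the main theorem -/

lemma isPauliSupportedOn_iff (A : Finset ι) (M : Op ι) :
    IsPauliSupportedOn A M ↔ ∃ (c : ℂ) (a b : ι → Fin 2), IsPhase c ∧
      (∀ i, i ∉ A → a i = 0 ∧ b i = 0) ∧ M = c • (Xmat a * Zmat b) := by
  unfold IsPauliSupportedOn
  constructor
  · rintro ⟨c, a, b, hc, hs, rfl⟩; exact ⟨c, a, b, hc, hs, by rw [XProd_eq, ZProd_eq]⟩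
  · rintro ⟨c, a, b, hc, hs, rfl⟩; exact ⟨c, a, b, hc, hs, by rw [XProd_eq, ZProd_eq]⟩

lemma ptrace_smul (A : Finset ι) (c : ℂ) (M : Op ι) :
    ptrace A (c • M) = c • ptrace A M := by
  ext f g
  simp [ptrace, Finset.mul_sum]

lemma ptrace_sum {γ : Type*} (A : Finset ι) (t : Finset γ) (F : γ → Op ι) :
    ptrace A (∑ x ∈ t, F x) = ∑ x ∈ t, ptrace A (F x) := by
  ext f g
  simp only [ptrace, Matrix.of_apply, Matrix.sum_apply]
  rw [Finset.sum_comm]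

lemma outer_isHermitian (ψ : (ι → Fin 2) → ℂ) : (outer ψ).IsHermitian := by
  unfold Matrix.IsHermitian
  ext f g
  simp [outer, Matrix.conjTranspose_apply, mul_comm]

lemma sum_conj_mul_self {ψ : (ι → Fin 2) → ℂ} (hψ : IsUnitVec ψ) :
    ∑ k, ψ k * star (ψ k) = 1 := by
  have h : ∀ k : ι → Fin 2, ψ k * star (ψ k) = ((Complex.normSq (ψ k) : ℂ)) := by
    intro k
    rw [show star (ψ k) = (starRingEnd ℂ) (ψ k) from rfl, Complex.mul_conj]
  rw [Finset.sum_congr rfl fun k _ => h k]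
  unfold IsUnitVec at hψ
  rw [← Complex.ofReal_sum, hψ, Complex.ofReal_one]

lemma trace_outer {ψ : (ι → Fin 2) → ℂ} (hψ : IsUnitVec ψ) :
    Matrix.trace (outer ψ) = 1 := by
  unfold Matrix.trace outer
  simp only [Matrix.diag_apply, Matrix.of_apply]
  exact sum_conj_mul_self hψ

lemma outer_mul_outer {ψ : (ι → Fin 2) → ℂ} (hψ : IsUnitVec ψ) :
    outer ψ * outer ψ = outer ψ := by
  ext f g
  simp only [outer, Matrix.mul_apply, Matrix.of_apply]
  have : ∀ k : ι → Fin 2, ψ f * star (ψ k) * (ψ k * star (ψ g))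
      = (ψ f * star (ψ g)) * (ψ k * star (ψ k)) := by
    intro k
    rw [show star (ψ k) = (starRingEnd ℂ) (ψ k) from rfl,
      show star (ψ g) = (starRingEnd ℂ) (ψ g) from rfl]
    ring
  rw [Finset.sum_congr rfl fun k _ => this k, ← Finset.mul_sum, sum_conj_mul_self hψ, mul_one]

lemma op_sum_mulVec {γ : Type*} (t : Finset γ) (F : γ → Op ι) (v : (ι → Fin 2) → ℂ) :
    (∑ T ∈ t, F T) *ᵥ v = ∑ T ∈ t, F T *ᵥ v := by
  funext x
  simp only [Matrix.mulVec, dotProduct, Finset.sum_apply, Matrix.sum_apply,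
    Finset.sum_mul]
  exact Finset.sum_comm

/-! ### The main theorem -/

/-- For a stabilizer state `ψ` of an independent set of Hermitian pairwise
commuting Pauli strings with group `G`, and any subset `A` of the qubits, the reduced density
matrix of `|ψ⟩⟨ψ|` on `A` is `ρ_A = 2^{−|A|} Σ_{g ∈ G_A} g|_A`, where `G_A` is the
(finite) set of elements of `G` acting as the identity outside `A`. -/
theorem reduced_density_matrix_of_stabilizer_state {N : ℕ} (s : Fin N → Op (Fin N))
    (hindep : IndepStabs s)
    (ψ : (Fin N → Fin 2) → ℂ) (hψ : IsUnitVec ψ) (hstab : ∀ i, s i *ᵥ ψ = ψ) :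
    ∀ A : Finset (Fin N),
      ∃ hfin : {g ∈ (↑(Submonoid.closure (Set.range s)) : Set (Op (Fin N))) |
          IsPauliSupportedOn A g}.Finite,
        ptrace A (outer ψ)
          = ((2 : ℂ) ^ A.card)⁻¹ • ∑ g ∈ hfin.toFinset, restrictOp A g := by
  classical
  intro A
  obtain ⟨hpauli, hherm, hcomm, hinj, hnontriv⟩ := hindep
  have hnf : ∀ i, ∃ c a b, IsPhase c ∧ s i = c • (Xmat a * Zmat b) :=
    fun i => (isPauli_iff (s i)).mp (hpauli i)
  have hsq : ∀ i, s i * s i = 1 := fun i => pauli_sq_eq_one (hnf i) (hherm i)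
  have hPpauli : ∀ T : Finset (Fin N), ∃ c a b, IsPhase c ∧
      subProd s T = c • (Xmat a * Zmat b) := by
    intro T
    induction T using Finset.induction_on with
    | empty => rw [P_empty s hcomm]; exact isPauli_nf_one
    | @insert a T' ha ih =>
      rw [P_insert s hcomm ha]
      exact isPauli_nf_mul (hnf a) ih
  have hPherm : ∀ T, (subProd s T).IsHermitian := subProd_isHermitian s hcomm hherm
  have htraceP : ∀ T : Finset (Fin N), T.Nonempty → Matrix.trace (subProd s T) = 0 := by
    intro T hT
    obtain ⟨c, a, b, hc, hEq⟩ := hPpauli T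
    by_cases hab : a = 0 ∧ b = 0
    · exfalso
      obtain ⟨ha, hb⟩ := hab
      rw [ha, hb, Xmat_zero, Zmat_zero, mul_one] at hEq
      have hconj : (starRingEnd ℂ) c = c := by
        have h1 := (hPherm T).eq
        rw [hEq, Matrix.conjTranspose_smul, Matrix.conjTranspose_one] at h1
        have h2 := congrFun (congrFun h1 (fun _ => 0)) (fun _ => 0)
        simpa [Matrix.one_apply] using h2
      rcases conj_phase_eq_self hc hconj with rfl | rfl
      · exact (hnontriv T hT).1 (by rw [hEq, one_smul])
      · exact (hnontriv T hT).2 (by rw [hEq, neg_smul, one_smul])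
    · rw [hEq, trace_pauli_nf]
      tauto
  -- the group-average projector
  set Pi2 : Op (Fin N) := ((2 : ℂ) ^ N)⁻¹ • ∑ T : Finset (Fin N), subProd s T with hPi2
  have hcardF : Fintype.card (Finset (Fin N)) = 2 ^ N := by
    rw [Fintype.card_finset, Fintype.card_fin]
  have hPiP : ∀ T' : Finset (Fin N), Pi2 * subProd s T' = Pi2 := by
    intro T'
    rw [hPi2, smul_mul_assoc, Finset.sum_mul]
    congr 1
    have hre : ∀ T, subProd s T * subProd s T' = subProd s (symmDiff T T') :=
      fun T => P_mul s hcomm hsq T T'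
    rw [Finset.sum_congr rfl fun T _ => hre T]
    have hinv : Function.Involutive (fun T : Finset (Fin N) => symmDiff T T') := by
      intro T; simp [symmDiff_symmDiff_cancel_right]
    exact Equiv.sum_comp hinv.toPerm (subProd s)
  have hPiIdem : Pi2 * Pi2 = Pi2 := by
    conv_lhs => rw [hPi2, mul_smul_comm, Finset.mul_sum]
    rw [Finset.sum_congr rfl fun T' _ => hPiP T', Finset.sum_const, Finset.card_univ, hcardF]
    rw [← Nat.cast_smul_eq_nsmul ℂ, smul_smul]
    rw [show ((2 : ℂ) ^ N)⁻¹ * ((2 ^ N : ℕ) : ℂ) = 1 by push_cast; field_simp]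
    rw [one_smul]
  have hPψ : ∀ T : Finset (Fin N), subProd s T *ᵥ ψ = ψ := by
    intro T
    induction T using Finset.induction_on with
    | empty => rw [P_empty s hcomm, Matrix.one_mulVec]
    | @insert a T' ha ih =>
      rw [P_insert s hcomm ha, ← Matrix.mulVec_mulVec, ih, hstab]
  have hPiψ : Pi2 *ᵥ ψ = ψ := by
    rw [hPi2, Matrix.smul_mulVec, op_sum_mulVec]
    rw [Finset.sum_congr rfl fun T _ => hPψ T, Finset.sum_const, Finset.card_univ, hcardF]
    rw [← Nat.cast_smul_eq_nsmul ℂ, smul_smul]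
    rw [show ((2 : ℂ) ^ N)⁻¹ * ((2 ^ N : ℕ) : ℂ) = 1 by push_cast; field_simp]
    rw [one_smul]
  have hPiH : Pi2.IsHermitian := by
    unfold Matrix.IsHermitian
    rw [hPi2, Matrix.conjTranspose_smul, Matrix.conjTranspose_sum]
    rw [Finset.sum_congr rfl fun T _ => (hPherm T).eq]
    congr 1
    simp
  have htracePi : Matrix.trace Pi2 = 1 := by
    rw [hPi2, Matrix.trace_smul, Matrix.trace_sum]
    rw [Finset.sum_eq_single_of_mem (∅ : Finset (Fin N)) (Finset.mem_univ _)
      (fun T _ hT => htraceP T (Finset.nonempty_iff_ne_empty.mpr hT))]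
    rw [P_empty s hcomm, trace_one_op, Fintype.card_fin, smul_eq_mul]
    field_simp
  have hPiOuter : Pi2 * outer ψ = outer ψ := by
    ext f g
    simp only [outer, Matrix.mul_apply, Matrix.of_apply]
    have h1 : ∀ k, Pi2 f k * (ψ k * star (ψ g)) = (Pi2 f k * ψ k) * star (ψ g) := by
      intro k; ring
    rw [Finset.sum_congr rfl fun k _ => h1 k, ← Finset.sum_mul]
    have h2 : ∑ k, Pi2 f k * ψ k = ψ f := congrFun hPiψ f
    rw [h2]
  have hOuterPi : outer ψ * Pi2 = outer ψ := by
    have h1 := congrArg Matrix.conjTranspose hPiOuter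
    rwa [Matrix.conjTranspose_mul, hPiH.eq, (outer_isHermitian ψ).eq] at h1
  have hproj : outer ψ = Pi2 := by
    have hM := entries_zero_of_herm_idem_trace_zero (M := Pi2 - outer ψ)
      (hPiH.sub (outer_isHermitian ψ)) ?_ ?_
    · rw [sub_eq_zero] at hM; exact hM.symm
    · rw [sub_mul, mul_sub, mul_sub, hPiIdem, hPiOuter, hOuterPi, outer_mul_outer hψ]
      abel
    · rw [Matrix.trace_sub, htracePi, trace_outer hψ, sub_self]
  -- finiteness of the supported subgroup
  have hmemiff : ∀ g : Op (Fin N),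
      g ∈ Submonoid.closure (Set.range s) ↔ ∃ T, g = subProd s T :=
    fun g => mem_closure_iff_subProd s hcomm g hsq
  have hsub : {g ∈ (↑(Submonoid.closure (Set.range s)) : Set (Op (Fin N))) |
      IsPauliSupportedOn A g} ⊆ Set.range (subProd s) := by
    rintro g ⟨hg, -⟩
    obtain ⟨T, rfl⟩ := (hmemiff g).mp hg
    exact Set.mem_range_self T
  have hfin : {g ∈ (↑(Submonoid.closure (Set.range s)) : Set (Op (Fin N))) |
      IsPauliSupportedOn A g}.Finite := (Set.finite_range (subProd s)).subset hsub
  refine ⟨hfin, ?_⟩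
  set S : Finset (Finset (Fin N)) :=
    Finset.univ.filter (fun T => IsPauliSupportedOn A (subProd s T)) with hS
  have himg : hfin.toFinset = S.image (subProd s) := by
    ext g
    rw [Set.Finite.mem_toFinset, Finset.mem_image]
    constructor
    · rintro ⟨hg, hsup⟩
      obtain ⟨T, rfl⟩ := (hmemiff g).mp hg
      exact ⟨T, by simp [hS, hsup], rfl⟩
    · rintro ⟨T, hT, rfl⟩
      rw [hS, Finset.mem_filter] at hT
      exact ⟨(hmemiff _).mpr ⟨T, rfl⟩, hT.2⟩
  have hsum_img : ∑ g ∈ hfin.toFinset, restrictOp A g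
      = ∑ T ∈ S, restrictOp A (subProd s T) := by
    rw [himg, Finset.sum_image (fun T _ T' _ h => hinj h)]
  have hpt : ptrace A (outer ψ)
      = ((2:ℂ)^N)⁻¹ • ∑ T : Finset (Fin N), ptrace A (subProd s T) := by
    rw [hproj, hPi2, ptrace_smul, ptrace_sum]
  have hterm0 : ∀ T ∉ S, ptrace A (subProd s T) = 0 := by
    intro T hT
    rw [hS, Finset.mem_filter] at hT
    push_neg at hT
    have hnsup := hT (Finset.mem_univ T)
    obtain ⟨c, a, b, hc, hEq⟩ := hPpauli T
    by_cases hax : ∃ i, i ∉ A ∧ a i ≠ 0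
    · obtain ⟨i, hi, hai⟩ := hax
      rw [hEq]; exact ptrace_pauli_xbad A c a b hi hai
    · push_neg at hax
      have ha0 : ∀ i ∉ A, a i = 0 := hax
      have hbx : ∃ i, i ∉ A ∧ b i ≠ 0 := by
        by_contra hbx
        push_neg at hbx
        exact hnsup ((isPauliSupportedOn_iff A _).mpr ⟨c, a, b, hc,
          fun i hi => ⟨ha0 i hi, hbx i hi⟩, hEq⟩)
      obtain ⟨i, hi, hbi⟩ := hbx
      rw [hEq]; exact ptrace_pauli_zbad A c a b ha0 hi hbi
  have hterm1 : ∀ T ∈ S, ptrace A (subProd s T)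
      = ((2:ℂ) ^ (Aᶜ.card)) • restrictOp A (subProd s T) := by
    intro T hT
    rw [hS, Finset.mem_filter] at hT
    obtain ⟨c, a, b, hc, hsup, hEq⟩ := (isPauliSupportedOn_iff A _).mp hT.2
    rw [hEq]
    exact ptrace_pauli_supported A c a b (fun i hi => (hsup i hi).1)
      (fun i hi => (hsup i hi).2)
  have hfilter : ∑ T : Finset (Fin N), ptrace A (subProd s T)
      = ∑ T ∈ S, ptrace A (subProd s T) := by
    symm
    apply Finset.sum_subset (Finset.subset_univ S)
    intro T _ hT
    exact hterm0 T hT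
  rw [hpt, hfilter, Finset.sum_congr rfl hterm1, ← Finset.smul_sum, smul_smul, hsum_img]
  congr 1
  have hA : A.card ≤ N := by
    have := Finset.card_le_univ A
    rwa [Fintype.card_fin] at this
  have hcompl : Aᶜ.card = N - A.card := by
    rw [Finset.card_compl, Fintype.card_fin]
  rw [hcompl]
  have h2 : (2:ℂ)^(N - A.card) * 2^(A.card) = 2^N := by
    rw [← pow_add]
    congr 1
    omega
  have hne : (2:ℂ)^N ≠ 0 := pow_ne_zero _ two_ne_zero
  have hne2 : (2:ℂ)^(A.card) ≠ 0 := pow_ne_zero _ two_ne_zero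
  field_simp
  linear_combination h2

end QStab
end
end

section
/- Let N be even and label the qubits 1,…,N. Let P be a Pauli string that commutes with Z i for every 1 ≤ i ≤ N and commutes with g i = X(i−1) Z i X(i+1) for every 2 ≤ i ≤ N−1. Then P = c • G1^{a} G2^{b} for some c ∈ {1, −1, i, −i} and a, b ∈ {0,1}, where G1 = ∏_{i even} Z i and G2 = ∏_{i odd} Z i. -/
open scoped Classical
open scoped Matrix
noncomputable section
namespace QStab

variable {ι : Type*} [Fintype ι] [DecidableEq ι]

section Lemmas

variable {ι : Type*} [Fintype ι] [DecidableEq ι]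

private lemma fin2_cases (x : Fin 2) : x = 0 ∨ x = 1 := by omega

private lemma pz_apply (i : ι) (f g : ι → Fin 2) :
    PZ i f g = if f = g then (-1:ℂ) ^ ((f i : ℕ)) else 0 := rfl

private lemma px_apply' (i : ι) (f g : ι → Fin 2) :
    PX i f g = if g = Function.update f i (f i + 1) then 1 else 0 := by
  have h : (f = Function.update g i (g i + 1)) ↔ (g = Function.update f i (f i + 1)) := by
    constructor <;>
    · rintro rfl
      funext k
      by_cases hk : k = i
      · subst hk; simp [Function.update_self]; omega
      · simp [Function.update_of_ne hk]
  simp only [PX, Matrix.of_apply, h]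

private lemma zprod_list_apply (l : List ι) (b : ι → Fin 2) (f g : ι → Fin 2) :
    ((l.map fun i => PZ i ^ ((b i : ℕ))).prod) f g
      = if f = g then (-1:ℂ) ^ ((l.map fun i => (b i : ℕ) * (f i : ℕ)).sum) else 0 := by
  induction l with
  | nil => simp [Matrix.one_apply]
  | cons j l ih =>
    simp only [List.map_cons, List.prod_cons, List.sum_cons]
    rcases fin2_cases (b j) with hb | hb
    · rw [hb]
      simp only [Fin.val_zero, pow_zero, one_mul, ih, hb]
      simp
    · rw [hb, Fin.val_one, pow_one, Matrix.mul_apply]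
      simp only [pz_apply, ite_mul, zero_mul]
      rw [Finset.sum_ite_eq Finset.univ f]
      simp only [Finset.mem_univ, if_true, ih, hb, Fin.val_one, one_mul]
      simp [pow_add, mul_ite, mul_zero]

private lemma xprod_list_apply (l : List ι) (hl : l.Nodup) (a : ι → Fin 2) (f g : ι → Fin 2) :
    ((l.map fun i => PX i ^ ((a i : ℕ))).prod) f g
      = if (∀ i, f i = g i + (if i ∈ l then a i else 0)) then 1 else 0 := by
  induction l generalizing f with
  | nil =>
    simp only [List.map_nil, List.prod_nil, Matrix.one_apply, List.not_mem_nil, if_false]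
    congr 1
    simp [funext_iff, eq_comm]
  | cons j l ih =>
    have hj : j ∉ l := (List.nodup_cons.mp hl).1
    have hl' : l.Nodup := (List.nodup_cons.mp hl).2
    simp only [List.map_cons, List.prod_cons]
    rcases fin2_cases (a j) with ha | ha
    · rw [ha]
      simp only [Fin.val_zero, pow_zero, one_mul, ih hl']
      have key : ∀ i, (f i = g i + (if i ∈ l then a i else 0)) ↔
          (f i = g i + (if i ∈ j :: l then a i else 0)) := by
        intro i
        by_cases hij : i = j
        · subst hij; rw [if_neg hj, if_pos List.mem_cons_self, ha]
        · simp [List.mem_cons, hij]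
      congr 1
      exact propext (forall_congr' key)
    · rw [ha, Fin.val_one, pow_one, Matrix.mul_apply]
      simp only [px_apply', ite_mul, one_mul, zero_mul]
      rw [Finset.sum_ite_eq' Finset.univ (Function.update f j (f j + 1))]
      simp only [Finset.mem_univ, if_true, ih hl']
      have key : ∀ i, (Function.update f j (f j + 1) i = g i + (if i ∈ l then a i else 0)) ↔
          (f i = g i + (if i ∈ j :: l then a i else 0)) := by
        intro i
        by_cases hij : i = j
        · subst hij
          rw [Function.update_self, if_neg hj, if_pos List.mem_cons_self, ha]
          omega
        · rw [Function.update_of_ne hij]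
          simp [List.mem_cons, hij]
      congr 1
      exact propext (forall_congr' key)

private lemma zprod_apply (b : ι → Fin 2) (f g : ι → Fin 2) :
    ZProd b f g = if f = g then (-1:ℂ) ^ (∑ i, (b i : ℕ) * (f i : ℕ)) else 0 := by
  rw [ZProd, zprod_list_apply, Finset.sum_map_toList]

private lemma xprod_apply (a : ι → Fin 2) (f g : ι → Fin 2) :
    XProd a f g = if (∀ i, f i = g i + a i) then 1 else 0 := by
  rw [XProd, xprod_list_apply _ Finset.univ.nodup_toList]
  simp [Finset.mem_toList]

private lemma xz_apply (a b : ι → Fin 2) (f g : ι → Fin 2) :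
    (XProd a * ZProd b) f g
      = if (∀ i, f i = g i + a i) then (-1:ℂ) ^ (∑ i, (b i : ℕ) * (g i : ℕ)) else 0 := by
  rw [Matrix.mul_apply]
  rw [Finset.sum_eq_single g]
  · rw [xprod_apply, zprod_apply, if_pos rfl, ite_mul, one_mul, zero_mul]
  · intro h _ hh
    rw [zprod_apply, if_neg hh, mul_zero]
  · simp

end Lemmas

/-- (`N` even, qubits labeled `1, …, N`.)  If a Pauli string `P` commutes
with `Z i` for every `1 ≤ i ≤ N` and with the cluster stabilizer
`g i = X (i−1) Z i X (i+1)` for every `2 ≤ i ≤ N−1`, then `P = c • G1^a * G2^b` for some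
phase `c ∈ {1, −1, i, −i}` and `a, b ∈ {0, 1}`, where `G1 = ∏_{i even} Z i` and
`G2 = ∏_{i odd} Z i`. -/
theorem pauli_commuting_with_all_measurements_is_symmetry {N : ℕ} (hN : Even N)
    (P : Op (Fin N)) (hP : IsPauli P)
    (hZ : ∀ i : Fin N, Commute P (PZ i))
    (hg : ∀ i : ℕ, 2 ≤ i → i ≤ N - 1 → Commute P (GStr N (i - 1) (i + 1))) :
    ∃ (c : ℂ) (a b : ℕ), IsPhase c ∧ a ≤ 1 ∧ b ≤ 1 ∧
      P = c • ((Gsym1 N) ^ a * (Gsym2 N) ^ b) := by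
  obtain ⟨c, a, b, hc, rfl⟩ := hP
  have hc0 : c ≠ 0 := by
    rcases hc with h | h | h | h <;> subst h <;> simp [Complex.I_ne_zero]
  have hPa0 : (c • (XProd a * ZProd b)) a 0 = c := by
    rw [Matrix.smul_apply, xz_apply, if_pos (fun k => by simp)]
    simp
  -- Step A : a = 0
  have ha : a = 0 := by
    funext i
    have h2 : ((c • (XProd a * ZProd b)) * PZ i) a 0
        = (PZ i * (c • (XProd a * ZProd b))) a 0 := by rw [hZ i]
    rw [Matrix.mul_apply, Matrix.mul_apply] at h2
    simp only [pz_apply, mul_ite, mul_zero, ite_mul, zero_mul] at h2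
    rw [Finset.sum_ite_eq' Finset.univ (0 : Fin N → Fin 2),
      Finset.sum_ite_eq Finset.univ a] at h2
    simp only [Finset.mem_univ, if_true, hPa0, Pi.zero_apply, Fin.val_zero, pow_zero,
      mul_one] at h2
    rcases fin2_cases (a i) with h | h
    · simpa using h
    · exfalso
      rw [h, Fin.val_one, pow_one, neg_one_mul] at h2
      exact hc0 (by linear_combination h2 / 2)
  -- diagonal form
  have hdiag : ∀ f g : Fin N → Fin 2, (c • (XProd a * ZProd b)) f g
      = if f = g then c * (-1:ℂ) ^ (∑ k, (b k : ℕ) * (f k : ℕ)) else 0 := by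
    intro f g
    rw [Matrix.smul_apply, xz_apply, ha]
    by_cases hfg : f = g
    · subst hfg
      rw [if_pos (fun k => by simp), if_pos rfl, smul_eq_mul]
    · rw [if_neg (fun H => hfg (funext fun k => by simpa using H k)), if_neg hfg, smul_zero]
  -- Step B : commuting with GStr forces equal b on sites i-2 and i
  have hbstep : ∀ i : ℕ, 2 ≤ i → i ≤ N - 1 → ∀ (hA : i - 2 < N) (hB : i < N),
      b ⟨i - 2, hA⟩ = b ⟨i, hB⟩ := by
    intro i hi1 hi2 hA hB
    set k1 : Fin N := ⟨i - 2, hA⟩ with hk1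
    set k2 : Fin N := ⟨i, hB⟩ with hk2
    have hk12 : k1 ≠ k2 := by
      simp only [hk1, hk2, ne_eq, Fin.mk.injEq, Fin.val_mk]
      omega
    set x : Fin N → Fin 2 := fun k => if lbl k = i - 1 ∨ lbl k = i + 1 then 1 else 0 with hx
    set z : Fin N → Fin 2 := fun k =>
      if i - 1 < lbl k ∧ lbl k < i + 1 ∧ ¬(lbl k % 2 = (i - 1) % 2) then 1 else 0 with hz
    have hG : GStr N (i - 1) (i + 1) = XProd x * ZProd z := rfl
    have h2 : ((c • (XProd a * ZProd b)) * GStr N (i - 1) (i + 1)) x 0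
        = (GStr N (i - 1) (i + 1) * (c • (XProd a * ZProd b))) x 0 := by
      rw [hg i hi1 hi2]
    have hGx0 : GStr N (i - 1) (i + 1) x 0 = 1 := by
      rw [hG, xz_apply, if_pos (fun k => by simp)]
      simp
    have hL : ((c • (XProd a * ZProd b)) * GStr N (i - 1) (i + 1)) x 0
        = c * (-1:ℂ) ^ (∑ k, (b k : ℕ) * (x k : ℕ)) := by
      rw [Matrix.mul_apply, Finset.sum_eq_single x]
      · rw [hdiag, if_pos rfl, hGx0, mul_one]
      · intro h _ hh
        rw [hdiag, if_neg (fun e => hh e.symm), zero_mul]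
      · simp
    have hR : (GStr N (i - 1) (i + 1) * (c • (XProd a * ZProd b))) x 0 = c := by
      rw [Matrix.mul_apply, Finset.sum_eq_single (0 : Fin N → Fin 2)]
      · rw [hGx0, hdiag, if_pos rfl, one_mul]
        simp
      · intro h _ hh
        rw [hdiag, if_neg hh, mul_zero]
      · simp
    rw [hL, hR] at h2
    have hS : Even (∑ k, (b k : ℕ) * (x k : ℕ)) := by
      have h3 : ((-1 : ℂ)) ^ (∑ k, (b k : ℕ) * (x k : ℕ)) = 1 := by
        have := mul_left_cancel₀ hc0 (h2.trans (mul_one c).symm)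
        exact this
      exact (neg_one_pow_eq_one_iff_even (by norm_num : (-1 : ℂ) ≠ 1)).mp h3
    have hterm : ∀ k : Fin N, (b k : ℕ) * (x k : ℕ)
        = (if k = k1 then (b k1 : ℕ) else 0) + (if k = k2 then (b k2 : ℕ) else 0) := by
      intro k
      by_cases e1 : k = k1
      · subst e1
        rw [if_pos rfl, if_neg hk12]
        have hx1 : x k1 = 1 := if_pos (Or.inl (by show i - 2 + 1 = i - 1; omega))
        rw [hx1]
        simp
      · by_cases e2 : k = k2
        · subst e2
          rw [if_pos rfl, if_neg e1]
          have hx2 : x k2 = 1 := if_pos (Or.inr rfl)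
          rw [hx2]
          simp
        · have hk1v : (k : ℕ) ≠ i - 2 := fun hh => e1 (Fin.ext hh)
          have hk2v : (k : ℕ) ≠ i := fun hh => e2 (Fin.ext hh)
          have hx0 : x k = 0 := by
            refine if_neg ?_
            show ¬(lbl k = i - 1 ∨ lbl k = i + 1)
            simp only [lbl]
            omega
          rw [hx0, if_neg e1, if_neg e2]
          simp
    rw [Finset.sum_congr rfl (fun k _ => hterm k), Finset.sum_add_distrib,
      Finset.sum_ite_eq' Finset.univ k1, Finset.sum_ite_eq' Finset.univ k2] at hS
    simp only [Finset.mem_univ, if_true] at hS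
    rcases hS with ⟨r, hr⟩
    omega
  -- XProd a = 1
  have hXa : XProd a = 1 := by
    ext f g
    rw [xprod_apply, Matrix.one_apply, ha]
    by_cases hfg : f = g
    · subst hfg
      rw [if_pos (fun k => by simp), if_pos rfl]
    · rw [if_neg (fun H => hfg (funext fun k => by simpa using H k)), if_neg hfg]
  rcases Nat.eq_zero_or_pos N with hN0 | hNpos
  · -- N = 0 : everything is the identity
    subst hN0
    refine ⟨c, 0, 0, hc, Nat.zero_le _, Nat.zero_le _, ?_⟩
    rw [pow_zero, pow_zero, one_mul, hXa, one_mul]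
    congr 1
    ext f g
    rw [zprod_apply, Matrix.one_apply, Subsingleton.elim f g]
    simp
  have hN2 : 2 ≤ N := by
    rcases hN with ⟨m, hm⟩
    omega
  have h0N : 0 < N := by omega
  have h1N : 1 < N := by omega
  set i0 : Fin N := ⟨0, h0N⟩ with hi0
  set i1 : Fin N := ⟨1, h1N⟩ with hi1
  have hconst : ∀ k : Fin N, b k = if (k : ℕ) % 2 = 0 then b i0 else b i1 := by
    have H : ∀ v : ℕ, ∀ hvN : v < N, b ⟨v, hvN⟩ = if v % 2 = 0 then b i0 else b i1 := by
      intro v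
      induction v using Nat.strong_induction_on with
      | _ v ih =>
        intro hvN
        by_cases hv2 : v < 2
        · interval_cases v
          · rw [if_pos rfl, hi0]
          · rw [if_neg (by omega), hi1]
        · push_neg at hv2
          have hstep := hbstep v hv2 (by omega) (by omega) hvN
          rw [← hstep, ih (v - 2) (by omega) (by omega)]
          have hmod : (v - 2) % 2 = v % 2 := by omega
          rw [hmod]
    intro k
    have := H (k : ℕ) k.isLt
    simpa [Fin.eta] using this
  refine ⟨c, (b i1 : ℕ), (b i0 : ℕ), hc, by omega, by omega, ?_⟩
  rw [hXa, one_mul]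
  congr 1
  -- goal : ZProd b = Gsym1 N ^ (b i1) * Gsym2 N ^ (b i0)
  have hZ1 : ZProd (0 : Fin N → Fin 2) = 1 := by
    ext f g
    rw [zprod_apply, Matrix.one_apply]
    simp
  rcases fin2_cases (b i0) with h0 | h0 <;> rcases fin2_cases (b i1) with h1 | h1 <;>
      rw [h0, h1]
  · -- b = 0
    simp only [Fin.val_zero, pow_zero, one_mul]
    rw [show b = (0 : Fin N → Fin 2) from funext fun k => by
      rw [hconst k]; split <;> simp [h0, h1]]
    exact hZ1
  · -- only odd-index sites (even labels) : Gsym1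
    simp only [Fin.val_zero, Fin.val_one, pow_zero, pow_one, mul_one]
    rw [show b = (fun k => if lbl k % 2 = 0 then 1 else 0) from funext fun k => by
      rw [hconst k]
      rw [show lbl k = (k : ℕ) + 1 from rfl]
      by_cases hk : (k : ℕ) % 2 = 0
      · rw [if_pos hk, if_neg (by omega), h0]
      · rw [if_neg hk, if_pos (by omega), h1]]
    rfl
  · -- Gsym2
    simp only [Fin.val_zero, Fin.val_one, pow_zero, pow_one, one_mul]
    rw [show b = (fun k => if lbl k % 2 = 1 then 1 else 0) from funext fun k => by
      rw [hconst k]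
      rw [show lbl k = (k : ℕ) + 1 from rfl]
      by_cases hk : (k : ℕ) % 2 = 0
      · rw [if_pos hk, if_pos (by omega), h0]
      · rw [if_neg hk, if_neg (by omega), h1]]
    rfl
  · -- b = 1 everywhere : Gsym1 * Gsym2
    simp only [Fin.val_one, pow_one]
    have hb1 : ∀ k : Fin N, b k = 1 := by
      intro k
      rw [hconst k]
      split <;> [exact h0; exact h1]
    ext f g
    rw [zprod_apply b f g, Gsym1, Gsym2, Matrix.mul_apply, Finset.sum_eq_single g]
    · rw [zprod_apply, zprod_apply]
      by_cases hfg : f = g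
      · subst hfg
        rw [if_pos rfl, if_pos rfl, if_pos rfl, ← pow_add]
        congr 1
        rw [← Finset.sum_add_distrib]
        refine Finset.sum_congr rfl fun k _ => ?_
        rw [hb1 k]
        by_cases hk : lbl k % 2 = 0
        · rw [if_pos hk, if_neg (by omega)]
          simp
        · rw [if_neg hk, if_pos (by omega)]
          simp
      · rw [if_neg hfg, if_neg hfg, zero_mul]
    · intro h _ hh
      rw [zprod_apply _ h g, if_neg hh, mul_zero]
    · simp




end QStab
end
end

section
/- Let N be even and consider the periodic chain of N qubits with sites indexed by ℤ/N. There exists a unitary matrix U on the N-qubit space such that U (X i) U† = X i and U (Z i) U† = X(i−1) * Z i * X(i+1) for every i ∈ ℤ/N. Moreover, any unitary U satisfying these two families of relations also satisfies U (X(i−1) Z i X(i+1)) U† = Z i for every i ∈ ℤ/N; that is, conjugation by U exchanges the single-qubit operators Z i with the cluster stabilizers g i = X(i−1) Z i X(i+1). -/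
open scoped Classical
open scoped Matrix
noncomputable section
namespace QStab

variable {ι : Type*} [Fintype ι] [DecidableEq ι]

/-! ### Auxiliary machinery for Statement 8 -/

section Stmt8Aux

lemma bumpQ_bump (g : ι → Fin 2) (i : ι) :
    Function.update (Function.update g i (g i + 1)) i
      ((Function.update g i (g i + 1)) i + 1) = g := by
  rw [Function.update_self, Function.update_idem]
  have : g i + 1 + 1 = g i := by fin_omega
  rw [this, Function.update_eq_self]

/-- `bumpQ g i` flips the bit of `g` at site `i`. -/
def bumpQ (g : ι → Fin 2) (i : ι) : ι → Fin 2 := Function.update g i (g i + 1)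

lemma bumpQ_bumpQ (g : ι → Fin 2) (i : ι) : bumpQ (bumpQ g i) i = g := bumpQ_bump g i

lemma bumpQ_eq_iff {f g : ι → Fin 2} {i : ι} : f = bumpQ g i ↔ g = bumpQ f i := by
  constructor <;> rintro rfl <;> rw [bumpQ_bumpQ]

lemma bumpQ_inj {f g : ι → Fin 2} {i : ι} (h : bumpQ f i = bumpQ g i) : f = g := by
  have := congrArg (fun x => bumpQ x i) h
  simpa [bumpQ_bumpQ] using this

lemma bumpQ_comm (g : ι → Fin 2) (i j : ι) :
    bumpQ (bumpQ g j) i = bumpQ (bumpQ g i) j := by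
  rcases eq_or_ne i j with rfl | hij
  · rfl
  · unfold bumpQ
    rw [Function.update_of_ne hij, Function.update_of_ne hij.symm,
      Function.update_comm hij]

lemma PX_apply (i : ι) (f g : ι → Fin 2) :
    PX i f g = if f = bumpQ g i then 1 else 0 := rfl

lemma PZ_apply (i : ι) (f g : ι → Fin 2) :
    PZ i f g = if f = g then ((-1 : ℂ)) ^ ((f i : ℕ)) else 0 := rfl

lemma mul_PX_apply (M : Op ι) (i : ι) (f g : ι → Fin 2) :
    (M * PX i) f g = M f (bumpQ g i) := by
  simp only [Matrix.mul_apply, PX_apply, mul_ite, mul_one, mul_zero]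
  rw [Finset.sum_ite_eq']
  simp

lemma PX_mul_apply (M : Op ι) (i : ι) (f g : ι → Fin 2) :
    (PX i * M) f g = M (bumpQ f i) g := by
  simp only [Matrix.mul_apply, PX_apply, ite_mul, one_mul, zero_mul]
  have : ∀ h : ι → Fin 2, (f = bumpQ h i) ↔ (h = bumpQ f i) := fun h => bumpQ_eq_iff
  simp only [this]
  rw [Finset.sum_ite_eq']
  simp

lemma mul_PZ_apply (M : Op ι) (i : ι) (f g : ι → Fin 2) :
    (M * PZ i) f g = M f g * (-1) ^ ((g i : ℕ)) := by
  simp only [Matrix.mul_apply, PZ_apply, mul_ite, mul_zero]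
  rw [Finset.sum_ite_eq']
  simp

lemma PZ_mul_apply (M : Op ι) (i : ι) (f g : ι → Fin 2) :
    (PZ i * M) f g = (-1) ^ ((f i : ℕ)) * M f g := by
  simp only [Matrix.mul_apply, PZ_apply, ite_mul, zero_mul]
  rw [Finset.sum_eq_single f] <;> simp +contextual [eq_comm]

lemma PX_sq (i : ι) : PX i * PX i = 1 := by
  ext f g
  rw [PX_mul_apply, PX_apply, Matrix.one_apply]
  have : (bumpQ f i = bumpQ g i) ↔ f = g := ⟨bumpQ_inj, by rintro rfl; rfl⟩
  simp only [this]

lemma PX_commute (i j : ι) : PX i * PX j = PX j * PX i := by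
  ext f g
  rw [PX_mul_apply, PX_mul_apply, PX_apply, PX_apply]
  have h1 : (bumpQ f i = bumpQ g j) ↔ (bumpQ f j = bumpQ g i) := by
    constructor
    · intro h
      have hf : f = bumpQ (bumpQ g j) i := by
        have := congrArg (fun x => bumpQ x i) h
        simpa [bumpQ_bumpQ] using this
      rw [hf, bumpQ_comm, bumpQ_bumpQ]
    · intro h
      have hf : f = bumpQ (bumpQ g i) j := by
        have := congrArg (fun x => bumpQ x j) h
        simpa [bumpQ_bumpQ] using this
      rw [hf, bumpQ_comm, bumpQ_bumpQ]
  simp only [h1]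

lemma PZ_PX_commute {i j : ι} (h : i ≠ j) : PZ i * PX j = PX j * PZ i := by
  ext f g
  rw [PZ_mul_apply, mul_PZ_apply, PX_apply]
  rcases eq_or_ne f (bumpQ g j) with rfl | hf
  · have : bumpQ g j i = g i := by unfold bumpQ; rw [Function.update_of_ne h]
    simp [this, mul_comm]
  · simp [hf]

lemma PZ_PX_anticommute (i : ι) : PZ i * PX i = -(PX i * PZ i) := by
  ext f g
  rw [PZ_mul_apply, Matrix.neg_apply, mul_PZ_apply, PX_apply]
  rcases eq_or_ne f (bumpQ g i) with rfl | hf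
  · have h1 : bumpQ g i i = g i + 1 := by unfold bumpQ; rw [Function.update_self]
    have h2 : ∀ x : Fin 2, ((-1 : ℂ)) ^ (((x + 1 : Fin 2) : ℕ)) = -((-1 : ℂ)) ^ ((x : ℕ)) := by
      intro x
      fin_cases x
      · norm_num
      · norm_num [show ((1 : Fin 2) + 1) = 0 from rfl]
    simp [h1, h2 (g i)]
  · simp [hf]

lemma PX_conjT (i : ι) : (PX i)ᴴ = PX i := by
  ext f g
  rw [Matrix.conjTranspose_apply, PX_apply, PX_apply]
  have : (g = bumpQ f i) ↔ (f = bumpQ g i) := bumpQ_eq_iff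
  simp only [← this]
  split <;> simp

/-! #### The elementary duality gates `W = (1/2)(1 + a + b - ab)` -/

/-- `wopQ a b = (1/2)(1 + a + b - ab)`; for commuting self-inverse Hermitian `a`, `b`
this is the "controlled-Z in the X basis" gate. -/
def wopQ (a b : Op ι) : Op ι := (2:ℂ)⁻¹ • (1 + a + b - a*b)

lemma quadQ0 (a b : Op ι) (ha : a*a=1) (hb : b*b=1) (hab : a*b=b*a) :
    (1+a+b-a*b) * (1+a+b-a*b) = 1+1+1+1 := by
  have hba : b*a = a*b := hab.symm
  have haa : ∀ x, a*(a*x) = x := fun x => by rw [← mul_assoc, ha, one_mul]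
  have hbb : ∀ x, b*(b*x) = x := fun x => by rw [← mul_assoc, hb, one_mul]
  have hbax : ∀ x, b*(a*x) = a*(b*x) := fun x => by
    rw [← mul_assoc, hba, mul_assoc]
  simp only [mul_add, mul_sub, add_mul, sub_mul, one_mul, mul_one, mul_assoc,
    hba, haa, hbb, hbax, ha, hb]
  abel

lemma quadQ1 (a b : Op ι) (ha : a*a=1) (hb : b*b=1) (hab : a*b=b*a) :
    (1+a+b-a*b) * (1-a+b+a*b) = b+b+b+b := by
  have hba : b*a = a*b := hab.symm
  have haa : ∀ x, a*(a*x) = x := fun x => by rw [← mul_assoc, ha, one_mul]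
  have hbb : ∀ x, b*(b*x) = x := fun x => by rw [← mul_assoc, hb, one_mul]
  have hbax : ∀ x, b*(a*x) = a*(b*x) := fun x => by
    rw [← mul_assoc, hba, mul_assoc]
  simp only [mul_add, mul_sub, add_mul, sub_mul, one_mul, mul_one, mul_assoc,
    hba, haa, hbb, hbax, ha, hb]
  abel

lemma quadQ2 (c a : Op ι) (hc : c*c=1) (ha : a*a=1) (hca : c*a=a*c) :
    (1+c+a-c*a) * (1+c-a+c*a) = c+c+c+c := by
  have hac : a*c = c*a := hca.symm
  have hcc : ∀ x, c*(c*x) = x := fun x => by rw [← mul_assoc, hc, one_mul]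
  have haa : ∀ x, a*(a*x) = x := fun x => by rw [← mul_assoc, ha, one_mul]
  have hacx : ∀ x, a*(c*x) = c*(a*x) := fun x => by
    rw [← mul_assoc, hac, mul_assoc]
  simp only [mul_add, mul_sub, add_mul, sub_mul, one_mul, mul_one, mul_assoc,
    hac, hcc, haa, hacx, hc, ha]
  abel

lemma zpushQ1 (a b z : Op ι) (hza : z*a = -(a*z)) (hzb : z*b = b*z) :
    z * (1+a+b-a*b) = (1-a+b+a*b) * z := by
  have h1 : z*(a*b) = -((a*b)*z) := by
    rw [← mul_assoc, hza, neg_mul, mul_assoc, hzb, ← mul_assoc]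
  simp only [mul_add, mul_sub, add_mul, sub_mul, one_mul, mul_one, hza, hzb, h1]
  abel

lemma zpushQ2 (c a z : Op ι) (hzc : z*c = c*z) (hza : z*a = -(a*z)) :
    z * (1+c+a-c*a) = (1+c-a+c*a) * z := by
  have h1 : z*(c*a) = -((c*a)*z) := by
    rw [← mul_assoc, hzc, mul_assoc, hza, mul_neg, mul_assoc c a z]
  simp only [mul_add, mul_sub, add_mul, sub_mul, one_mul, mul_one, hza, hzc, h1]
  abel

lemma four_inv_smulQ (b : Op ι) : (2:ℂ)⁻¹ • ((2:ℂ)⁻¹ • (b+b+b+b)) = b := by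
  rw [show b+b+b+b = (4:ℂ)•b from by module, smul_smul, smul_smul]
  norm_num

lemma comm_wopQ (x a b : Op ι) (h1 : Commute x a) (h2 : Commute x b) :
    Commute x (wopQ a b) :=
  ((((Commute.one_right x).add_right h1).add_right h2).sub_right
    (h1.mul_right h2)).smul_right _

lemma wopQ_sq (a b : Op ι) (ha : a*a=1) (hb : b*b=1) (hab : a*b=b*a) :
    wopQ a b * wopQ a b = 1 := by
  rw [wopQ, smul_mul_assoc, mul_smul_comm, quadQ0 a b ha hb hab, four_inv_smulQ]

lemma wopQ_conjT (a b : Op ι) (ha : aᴴ = a) (hb : bᴴ = b) (hab : a*b=b*a) :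
    (wopQ a b)ᴴ = wopQ a b := by
  rw [wopQ, Matrix.conjTranspose_smul]
  rw [show (star ((2:ℂ)⁻¹)) = (2:ℂ)⁻¹ from by norm_num]
  rw [Matrix.conjTranspose_sub, Matrix.conjTranspose_add, Matrix.conjTranspose_add,
    Matrix.conjTranspose_one, Matrix.conjTranspose_mul, ha, hb, ← hab]

lemma conj_keyQ (a b c z : Op ι) (ha : a*a=1) (hb : b*b=1) (hc : c*c=1)
    (hab : a*b=b*a) (hac : a*c=c*a) (hbc : b*c=c*b)
    (hza : z*a = -(a*z)) (hzb : z*b = b*z) (hzc : z*c = c*z) :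
    (wopQ c a * wopQ a b) * z * (wopQ c a * wopQ a b) = c * z * b := by
  have cab : Commute a b := hab
  have cac : Commute a c := hac
  have cbc : Commute b c := hbc
  set P := wopQ c a with hP
  set Q := wopQ a b with hQ
  set P' : Op ι := (2:ℂ)⁻¹ • (1+c-a+c*a) with hP'
  set Q' : Op ι := (2:ℂ)⁻¹ • (1-a+b+a*b) with hQ'
  have hzP : z * P = P' * z := by
    rw [hP, hP', wopQ, mul_smul_comm, smul_mul_assoc, zpushQ2 c a z hzc hza]
  have hzQ : z * Q = Q' * z := by
    rw [hQ, hQ', wopQ, mul_smul_comm, smul_mul_assoc, zpushQ1 a b z hza hzb]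
  have hPP' : P * P' = c := by
    rw [hP, hP', wopQ, smul_mul_assoc, mul_smul_comm, quadQ2 c a hc ha hac.symm,
      four_inv_smulQ]
  have hQQ' : Q * Q' = b := by
    rw [hQ, hQ', wopQ, smul_mul_assoc, mul_smul_comm, quadQ1 a b ha hb hab,
      four_inv_smulQ]
  have hQP' : Commute Q P' := by
    rw [hQ, hP', wopQ]
    have h1 : Commute (1+a+b-a*b) c :=
      ((((Commute.one_left c).add_left cac).add_left cbc).sub_left (cac.mul_left cbc))
    have h2 : Commute (1+a+b-a*b) a :=
      ((((Commute.one_left a).add_left (Commute.refl a)).add_left cab.symm).sub_left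
        ((Commute.refl a).mul_left cab.symm))
    have h3 : Commute (1+a+b-a*b) (1+c-a+c*a) :=
      (((Commute.one_right _).add_right h1).sub_right h2).add_right (h1.mul_right h2)
    exact (h3.smul_left _).smul_right _
  have hzP2 : ∀ x, z*(P*x) = P'*(z*x) := fun x => by
    rw [← mul_assoc, hzP, mul_assoc]
  have hQP'2 : ∀ x, Q*(P'*x) = P'*(Q*x) := fun x => by
    rw [← mul_assoc, hQP'.eq, mul_assoc]
  have hPP'2 : ∀ x, P*(P'*x) = c*x := fun x => by rw [← mul_assoc, hPP']
  have hQQ'2 : ∀ x, Q*(Q'*x) = b*x := fun x => by rw [← mul_assoc, hQQ']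
  calc P * Q * z * (P * Q) = P*(Q*(z*(P*Q))) := by simp only [mul_assoc]
    _ = c * z * b := by
        rw [hzP2, hzQ, hQP'2, hQQ'2, hPP'2, ← hzb, ← mul_assoc]

/-! #### Products of commuting factors -/

lemma noncommProd_conjT {κ : Type*} (s : Finset κ) (f : κ → Op ι) :
    ∀ (comm : (↑s : Set κ).Pairwise (Function.onFun Commute f)),
      (∀ x ∈ s, (f x)ᴴ = f x) → (s.noncommProd f comm)ᴴ = s.noncommProd f comm := by
  induction s using Finset.cons_induction with
  | empty => intro comm h; simp
  | cons a s ha ih =>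
    intro comm h
    rw [Finset.noncommProd_cons]
    have hcm : Commute (f a) (s.noncommProd f (comm.mono (by simp))) :=
      Finset.noncommProd_commute _ _ _ _ (fun x hx =>
        comm (by simp) (by simp [hx]) (fun hax => ha (by rw [hax]; exact hx)))
    rw [Matrix.conjTranspose_mul, ih _ (fun x hx => h x (by simp [hx])),
      h a (by simp), hcm.eq]

lemma noncommProd_sqQ {κ : Type*} {M : Type*} [Monoid M] (s : Finset κ) (f : κ → M) :
    ∀ (comm : (↑s : Set κ).Pairwise (Function.onFun Commute f)),
      (∀ x ∈ s, f x * f x = 1) →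
      s.noncommProd f comm * s.noncommProd f comm = 1 := by
  induction s using Finset.cons_induction with
  | empty => intro comm h; simp
  | cons a s ha ih =>
    intro comm h
    rw [Finset.noncommProd_cons]
    set P := s.noncommProd f (comm.mono (by simp)) with hPdef
    have hcm : Commute (f a) P :=
      Finset.noncommProd_commute _ _ _ _ (fun x hx =>
        comm (by simp) (by simp [hx]) (fun hax => ha (by rw [hax]; exact hx)))
    have hPP : P * P = 1 := ih _ (fun x hx => h x (by simp [hx]))
    calc f a * P * (f a * P) = f a * ((P * f a) * P) := by
          rw [mul_assoc, ← mul_assoc P]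
      _ = f a * (f a * (P * P)) := by rw [← hcm.eq, mul_assoc]
      _ = 1 := by rw [hPP, mul_one]; exact h a (by simp)

/-- The site gate for the duality unitary: `W j = (1/2)(1 + X j + X (j+1) - X j X (j+1))`. -/
def WnQ {N : ℕ} [NeZero N] (j : ZMod N) : Op (ZMod N) := wopQ (PX j) (PX (j+1))

end Stmt8Aux

/-- (Periodic chain of `N` qubits, `N` even, sites indexed by `ℤ/N`.)
There exists a unitary `U` with `U (X i) U† = X i` and `U (Z i) U† = X(i−1) Z i X(i+1)`
for all `i`; moreover any unitary `U` satisfying these relations also satisfies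
`U (X(i−1) Z i X(i+1)) U† = Z i` for all `i`: conjugation by `U` exchanges the
single-qubit `Z i` with the cluster stabilizers. -/
theorem duality_unitary_exists_and_swaps {N : ℕ} [NeZero N] (hN : Even N) :
    (∃ U : Op (ZMod N),
      U * Uᴴ = 1 ∧ Uᴴ * U = 1 ∧
      (∀ i : ZMod N, U * PX i * Uᴴ = PX i) ∧
      (∀ i : ZMod N, U * PZ i * Uᴴ = PX (i - 1) * PZ i * PX (i + 1))) ∧
    (∀ U : Op (ZMod N), U * Uᴴ = 1 → Uᴴ * U = 1 →
      (∀ i : ZMod N, U * PX i * Uᴴ = PX i) →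
      (∀ i : ZMod N, U * PZ i * Uᴴ = PX (i - 1) * PZ i * PX (i + 1)) →
      ∀ i : ZMod N, U * (PX (i - 1) * PZ i * PX (i + 1)) * Uᴴ = PZ i) := by
  classical
  have hN2 : 2 ≤ N := by
    rcases hN with ⟨k, hk⟩
    have := NeZero.ne N
    omega
  haveI : Fact (1 < N) := ⟨by omega⟩
  have hone : (1 : ZMod N) ≠ 0 := one_ne_zero
  have hsub : ∀ i : ZMod N, i - 1 ≠ i := fun i h => hone (sub_eq_self.mp h)
  have hadd : ∀ i : ZMod N, i + 1 ≠ i := fun i h => hone (by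
    have := congrArg (fun x => x - i) h
    simpa using this)
  have cXW : ∀ k j : ZMod N, Commute (PX k) (WnQ j) := fun k j =>
    comm_wopQ _ _ _ (PX_commute k j) (PX_commute k (j+1))
  have cWW : ∀ j k : ZMod N, Commute (WnQ j) (WnQ k) := fun j k =>
    comm_wopQ _ _ _ (cXW k j).symm (cXW (k+1) j).symm
  have hcomm : ((Finset.univ : Finset (ZMod N)) : Set (ZMod N)).Pairwise (Function.onFun Commute WnQ) :=
    fun x _ y _ _ => cWW x y
  set U : Op (ZMod N) := Finset.univ.noncommProd WnQ hcomm with hUdef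
  have hwopH : ∀ j : ZMod N, (WnQ j)ᴴ = WnQ j := fun j =>
    wopQ_conjT _ _ (PX_conjT j) (PX_conjT (j+1)) (PX_commute j (j+1))
  have hwopsq : ∀ j : ZMod N, WnQ j * WnQ j = 1 := fun j =>
    wopQ_sq _ _ (PX_sq j) (PX_sq (j+1)) (PX_commute j (j+1))
  have hUH : Uᴴ = U := noncommProd_conjT _ _ hcomm (fun x _ => hwopH x)
  have hUsq : U * U = 1 := noncommProd_sqQ _ _ hcomm (fun x _ => hwopsq x)
  have hU1 : U * Uᴴ = 1 := by rw [hUH]; exact hUsq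
  have hU2 : Uᴴ * U = 1 := by rw [hUH]; exact hUsq
  have hUX : ∀ i : ZMod N, U * PX i * Uᴴ = PX i := by
    intro i
    have hc : Commute (PX i) U :=
      Finset.noncommProd_commute _ _ _ _ (fun x _ => cXW i x)
    rw [hUH, ← hc.eq, mul_assoc, hUsq, mul_one]
  have hUZ : ∀ i : ZMod N, U * PZ i * Uᴴ = PX (i - 1) * PZ i * PX (i + 1) := by
    intro i
    have h1 : i ∉ (Finset.univ.erase (i-1)).erase i := Finset.notMem_erase i _
    set t : Finset (ZMod N) := (Finset.univ.erase (i-1)).erase i with htdef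
    have h2 : i - 1 ∉ Finset.cons i t h1 := by
      rw [Finset.mem_cons]
      rintro (h | h)
      · exact hsub i h
      · exact Finset.notMem_erase (i-1) _ (Finset.mem_of_mem_erase h)
    have huniv : (Finset.univ : Finset (ZMod N)) = Finset.cons (i-1) (Finset.cons i t h1) h2 := by
      ext x
      simp only [Finset.mem_univ, Finset.mem_cons, htdef, Finset.mem_erase]
      tauto
    have commt : (↑t : Set (ZMod N)).Pairwise (Function.onFun Commute WnQ) := fun x _ y _ _ => cWW x y
    set R : Op (ZMod N) := t.noncommProd WnQ commt with hRdef
    have hsplit : U = WnQ (i-1) * (WnQ i * R) := by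
      rw [hUdef, Finset.noncommProd_congr huniv (fun x _ => rfl) hcomm]
      have hc' : (↑(Finset.cons (i-1) (Finset.cons i t h1) h2) : Set (ZMod N)).Pairwise
          (Function.onFun Commute WnQ) := fun x _ y _ _ => cWW x y
      show (Finset.cons (i-1) (Finset.cons i t h1) h2).noncommProd WnQ hc' = _
      rw [Finset.noncommProd_cons, Finset.noncommProd_cons]
    have htmem : ∀ x ∈ t, x ≠ i ∧ x ≠ i - 1 := by
      intro x hx
      rw [htdef, Finset.mem_erase, Finset.mem_erase] at hx
      exact ⟨hx.1, hx.2.1⟩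
    have hRZ : Commute (PZ i) R := by
      refine Finset.noncommProd_commute _ _ _ _ (fun x hx => ?_)
      obtain ⟨hxi, hxi1⟩ := htmem x hx
      refine comm_wopQ _ _ _ (PZ_PX_commute (fun h => hxi h.symm)) (PZ_PX_commute ?_)
      intro h
      exact hxi1 (by rw [eq_sub_iff_add_eq]; exact h.symm)
    have hRA : Commute R (WnQ (i-1)) :=
      (Finset.noncommProd_commute _ _ _ _ (fun x _ => cWW (i-1) x)).symm
    have hRB : Commute R (WnQ i) :=
      (Finset.noncommProd_commute _ _ _ _ (fun x _ => cWW i x)).symm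
    have hRsq : R * R = 1 := noncommProd_sqQ _ _ commt (fun x _ => hwopsq x)
    have e1 : ∀ x : Op (ZMod N), R*(PZ i*x) = PZ i*(R*x) := fun x => by
      rw [← mul_assoc, ← hRZ.eq, mul_assoc]
    have e2 : ∀ x : Op (ZMod N), R*(WnQ (i-1)*x) = WnQ (i-1)*(R*x) := fun x => by
      rw [← mul_assoc, hRA.eq, mul_assoc]
    have e3 : ∀ x : Op (ZMod N), R*(WnQ i*x) = WnQ i*(R*x) := fun x => by
      rw [← mul_assoc, hRB.eq, mul_assoc]
    rw [hUH, hsplit]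
    simp only [mul_assoc]
    rw [e1, e2, e3, hRsq, mul_one]
    have hA : WnQ (i-1) = wopQ (PX (i-1)) (PX i) := by
      rw [WnQ, show i - 1 + 1 = i from by ring]
    have key := conj_keyQ (PX i) (PX (i+1)) (PX (i-1)) (PZ i)
      (PX_sq i) (PX_sq (i+1)) (PX_sq (i-1))
      (PX_commute i (i+1)) (PX_commute i (i-1)) (PX_commute (i+1) (i-1))
      (PZ_PX_anticommute i) (PZ_PX_commute (hadd i).symm) (PZ_PX_commute (hsub i).symm)
    simp only [mul_assoc] at key
    rw [hA, WnQ]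
    exact key
  refine ⟨⟨U, hU1, hU2, hUX, hUZ⟩, ?_⟩
  intro V hV1 hV2 hVX hVZ i
  have hins : ∀ x : Op (ZMod N), Vᴴ*(V*x) = x := fun x => by
    rw [← mul_assoc, hV2, one_mul]
  have expand : ∀ A B C : Op (ZMod N),
      (V*A*Vᴴ)*(V*B*Vᴴ)*(V*C*Vᴴ) = V*(A*B*C)*Vᴴ := by
    intro A B C
    simp only [mul_assoc]
    rw [hins, hins]
  rw [← expand, hVX (i-1), hVX (i+1), hVZ i]
  simp only [mul_assoc]
  rw [PX_sq, mul_one, ← mul_assoc, PX_sq, one_mul]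

end QStab
end
end
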